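/- arXiv:1503.03742 — 3 statements merged into one kernel-verified Lean document; each statement's English description precedes it below -/
import Mathlib

section
/- In the two-knapsack setting, assume additionally that ∑_{i=1}^n a_i u_i > b, ∑_{i=1}^{n−1} w_i u_i + (θ_n − 1)·w_n ≥ d, and γ_n ≤ θ_n − 2. Then conv(K^≤ ∩ K^≥) = {x ∈ conv(K^≤) : x_n ≥ γ_n + 1} ∪ {x ∈ conv(K^≥) : x_n ≤ θ_n − 1}, and this set equals conv(K^≤) ∩ conv(K^≥). -/
/-- Embedding of integer vectors into real vectors. -/
noncomputable def toReal {n : ℕ} (x : Fin n → ℤ) : Fin n → ℝ := fun i => (x i : ℝ)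

lemma toReal_update {n : ℕ} (z : Fin n → ℤ) (m : Fin n) (t : ℤ) :
    toReal (Function.update z m t) = Function.update (toReal z) m ((t : ℝ)) := by
  funext j
  by_cases h : j = m <;> simp [toReal, Function.update_apply, h]

lemma push1 {n : ℕ} (m : Fin n) {C : Set (Fin n → ℝ)} (hC : Convex ℝ C)
    {S : Set (Fin n → ℝ)} (c : ℝ) (hi : (Fin n → ℝ) → ℝ)
    (hxhi : ∀ x ∈ S, x m ≤ hi x)
    (hloC : ∀ x ∈ S, Function.update x m c ∈ C)
    (hhiC : ∀ x ∈ S, Function.update x m (hi x) ∈ C)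
    {y : Fin n → ℝ} (hy : y ∈ convexHull ℝ S) (hcy : c ≤ y m) :
    y ∈ C := by
  rw [convexHull_eq] at hy
  obtain ⟨ι, t, wt, z, hw0, hw1, hzS, hyc⟩ := hy
  have hyz : y = ∑ i ∈ t, wt i • z i := by
    rw [← hyc, Finset.centerMass_eq_of_sum_1 _ _ hw1]
  have hym : y m = ∑ i ∈ t, wt i * z i m := by
    rw [hyz]; simp [Finset.sum_apply]
  set H := ∑ i ∈ t, wt i * hi (z i) with hH
  have hyH : y m ≤ H := by
    rw [hym]
    exact Finset.sum_le_sum fun i hit =>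
      mul_le_mul_of_nonneg_left (hxhi _ (hzS i hit)) (hw0 i hit)
  set β := (y m - c) / (H - c) with hβ
  have hcH : c ≤ H := le_trans hcy hyH
  have hβ0 : 0 ≤ β := div_nonneg (by linarith) (by linarith)
  have hβ1 : β ≤ 1 := by
    rcases eq_or_lt_of_le hcH with h | h
    · simp [hβ, ← h]
    · rw [hβ, div_le_one (by linarith)]; linarith
  have hkey : (1 - β) * c + β * H = y m := by
    rcases eq_or_lt_of_le hcH with h | h
    · have : y m = c := le_antisymm (h ▸ hyH) hcy
      simp [hβ, ← h, this]
    · have hne : H - c ≠ 0 := by linarith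
      have h2 : β * (H - c) = y m - c := by rw [hβ]; field_simp
      have h3 : (1 - β) * c + β * H = c + β * (H - c) := by ring
      linarith [h2, h3]
  have hmem : ∀ i ∈ t,
      (1 - β) • Function.update (z i) m c + β • Function.update (z i) m (hi (z i)) ∈ C :=
    fun i hit => hC (hloC _ (hzS i hit)) (hhiC _ (hzS i hit)) (by linarith) hβ0 (by ring)
  have hyeq : y = ∑ i ∈ t, wt i •
      ((1 - β) • Function.update (z i) m c + β • Function.update (z i) m (hi (z i))) := by
    funext j
    rw [Finset.sum_apply]
    by_cases hj : j = m
    · rw [hj]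
      have h4 : ∀ i ∈ t, (wt i • ((1 - β) • Function.update (z i) m c
          + β • Function.update (z i) m (hi (z i)))) m
          = wt i * ((1 - β) * c + β * hi (z i)) := by
        intro i _
        simp [Pi.smul_apply, Pi.add_apply, Function.update_self, smul_eq_mul]
      rw [Finset.sum_congr rfl h4]
      have h5 : ∑ i ∈ t, wt i * ((1 - β) * c + β * hi (z i))
          = (1 - β) * c * ∑ i ∈ t, wt i + β * ∑ i ∈ t, wt i * hi (z i) := by
        rw [Finset.mul_sum, Finset.mul_sum, ← Finset.sum_add_distrib]
        exact Finset.sum_congr rfl fun i _ => by ring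
      rw [h5, hw1, ← hH]
      linarith [hkey]
    · have h4 : ∀ i ∈ t, (wt i • ((1 - β) • Function.update (z i) m c
          + β • Function.update (z i) m (hi (z i)))) j = wt i * z i j := by
        intro i _
        simp only [Pi.smul_apply, Pi.add_apply, Function.update_of_ne hj, smul_eq_mul]
        ring
      rw [Finset.sum_congr rfl h4, hyz]
      simp [Finset.sum_apply]
  rw [hyeq]
  exact hC.sum_mem hw0 hw1 hmem

lemma push2 {n : ℕ} (m : Fin n) {C : Set (Fin n → ℝ)} (hC : Convex ℝ C)
    {S : Set (Fin n → ℝ)} (H : ℝ) (lo : (Fin n → ℝ) → ℝ)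
    (hlox : ∀ x ∈ S, lo x ≤ x m)
    (hloC : ∀ x ∈ S, Function.update x m (lo x) ∈ C)
    (hhiC : ∀ x ∈ S, Function.update x m H ∈ C)
    {y : Fin n → ℝ} (hy : y ∈ convexHull ℝ S) (hyH : y m ≤ H) :
    y ∈ C := by
  rw [convexHull_eq] at hy
  obtain ⟨ι, t, wt, z, hw0, hw1, hzS, hyc⟩ := hy
  have hyz : y = ∑ i ∈ t, wt i • z i := by
    rw [← hyc, Finset.centerMass_eq_of_sum_1 _ _ hw1]
  have hym : y m = ∑ i ∈ t, wt i * z i m := by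
    rw [hyz]; simp [Finset.sum_apply]
  set L := ∑ i ∈ t, wt i * lo (z i) with hL
  have hLy : L ≤ y m := by
    rw [hym]
    exact Finset.sum_le_sum fun i hit =>
      mul_le_mul_of_nonneg_left (hlox _ (hzS i hit)) (hw0 i hit)
  set β := (y m - L) / (H - L) with hβ
  have hLH : L ≤ H := le_trans hLy hyH
  have hβ0 : 0 ≤ β := div_nonneg (by linarith) (by linarith)
  have hβ1 : β ≤ 1 := by
    rcases eq_or_lt_of_le hLH with h | h
    · simp [hβ, ← h]
    · rw [hβ, div_le_one (by linarith)]; linarith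
  have hkey : (1 - β) * L + β * H = y m := by
    rcases eq_or_lt_of_le hLH with h | h
    · have : y m = L := le_antisymm (h ▸ hyH) hLy
      simp [hβ, ← h, this]
    · have hne : H - L ≠ 0 := by linarith
      have h2 : β * (H - L) = y m - L := by rw [hβ]; field_simp
      have h3 : (1 - β) * L + β * H = L + β * (H - L) := by ring
      linarith [h2, h3]
  have hmem : ∀ i ∈ t,
      (1 - β) • Function.update (z i) m (lo (z i)) + β • Function.update (z i) m H ∈ C :=
    fun i hit => hC (hloC _ (hzS i hit)) (hhiC _ (hzS i hit)) (by linarith) hβ0 (by ring)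
  have hyeq : y = ∑ i ∈ t, wt i •
      ((1 - β) • Function.update (z i) m (lo (z i)) + β • Function.update (z i) m H) := by
    funext j
    rw [Finset.sum_apply]
    by_cases hj : j = m
    · rw [hj]
      have h4 : ∀ i ∈ t, (wt i • ((1 - β) • Function.update (z i) m (lo (z i))
          + β • Function.update (z i) m H)) m
          = wt i * ((1 - β) * lo (z i) + β * H) := by
        intro i _
        simp [Pi.smul_apply, Pi.add_apply, Function.update_self, smul_eq_mul]
      rw [Finset.sum_congr rfl h4]
      have h5 : ∑ i ∈ t, wt i * ((1 - β) * lo (z i) + β * H)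
          = (1 - β) * ∑ i ∈ t, wt i * lo (z i) + β * H * ∑ i ∈ t, wt i := by
        rw [Finset.mul_sum, Finset.mul_sum, ← Finset.sum_add_distrib]
        exact Finset.sum_congr rfl fun i _ => by ring
      rw [h5, hw1, ← hL]
      linarith [hkey]
    · have h4 : ∀ i ∈ t, (wt i • ((1 - β) • Function.update (z i) m (lo (z i))
          + β • Function.update (z i) m H)) j = wt i * z i j := by
        intro i _
        simp only [Pi.smul_apply, Pi.add_apply, Function.update_of_ne hj, smul_eq_mul]
        ring
      rw [Finset.sum_congr rfl h4, hyz]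
      simp [Finset.sum_apply]
  rw [hyeq]
  exact hC.sum_mem hw0 hw1 hmem

lemma boxHull {n : ℕ} (lo hi : Fin n → ℤ) :
    ∀ (y : Fin n → ℝ), (∀ i, (lo i : ℝ) ≤ y i ∧ y i ≤ (hi i : ℝ)) →
    y ∈ convexHull ℝ (toReal '' {x : Fin n → ℤ | ∀ i, lo i ≤ x i ∧ x i ≤ hi i}) := by
  classical
  suffices h : ∀ (k : ℕ) (y : Fin n → ℝ),
      (Finset.univ.filter (fun i => ¬ ∃ z : ℤ, (z : ℝ) = y i)).card = k →
      (∀ i, (lo i : ℝ) ≤ y i ∧ y i ≤ (hi i : ℝ)) →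
      y ∈ convexHull ℝ (toReal '' {x : Fin n → ℤ | ∀ i, lo i ≤ x i ∧ x i ≤ hi i}) by
    intro y hy
    exact h _ y rfl hy
  intro k
  induction k with
  | zero =>
    intro y hk hy
    have hall : ∀ i : Fin n, ∃ z : ℤ, (z : ℝ) = y i := by
      intro i
      by_contra hcon
      have : i ∈ Finset.univ.filter (fun i => ¬ ∃ z : ℤ, (z : ℝ) = y i) :=
        Finset.mem_filter.mpr ⟨Finset.mem_univ i, hcon⟩
      rw [Finset.card_eq_zero] at hk
      rw [hk] at this
      exact absurd this (Finset.notMem_empty i)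
    choose x hx using hall
    apply subset_convexHull
    refine ⟨x, ?_, ?_⟩
    · intro i
      constructor
      · have := (hy i).1
        rw [← hx i] at this
        exact_mod_cast this
      · have := (hy i).2
        rw [← hx i] at this
        exact_mod_cast this
    · funext j; exact hx j
  | succ k ih =>
    intro y hk hy
    have hne : (Finset.univ.filter (fun i => ¬ ∃ z : ℤ, (z : ℝ) = y i)).Nonempty := by
      rw [← Finset.card_pos, hk]; omega
    obtain ⟨i0, hi0⟩ := hne
    have hni : ¬ ∃ z : ℤ, (z : ℝ) = y i0 := (Finset.mem_filter.mp hi0).2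
    set f := ⌊y i0⌋ with hf
    have hfl : (f : ℝ) < y i0 := by
      rcases lt_or_eq_of_le (Int.floor_le (y i0)) with h | h
      · exact h
      · exact absurd ⟨f, h⟩ hni
    have hfu : y i0 < (f : ℝ) + 1 := Int.lt_floor_add_one _
    have hlof : lo i0 ≤ f := Int.le_floor.mpr (hy i0).1
    have hfhi : f + 1 ≤ hi i0 := by
      have : (f : ℝ) < (hi i0 : ℝ) := lt_of_lt_of_le hfl (hy i0).2
      have : f < hi i0 := by exact_mod_cast this
      omega
    set y1 := Function.update y i0 ((f : ℝ)) with hy1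
    set y2 := Function.update y i0 ((f : ℝ) + 1) with hy2
    have hcard : ∀ (v : ℝ) (hv : ∃ z : ℤ, (z : ℝ) = v),
        (Finset.univ.filter (fun i => ¬ ∃ z : ℤ, (z : ℝ) = Function.update y i0 v i)).card = k := by
      intro v hv
      have : Finset.univ.filter (fun i => ¬ ∃ z : ℤ, (z : ℝ) = Function.update y i0 v i)
          = (Finset.univ.filter (fun i => ¬ ∃ z : ℤ, (z : ℝ) = y i)).erase i0 := by
        ext j
        simp only [Finset.mem_filter, Finset.mem_erase, Finset.mem_univ, true_and]
        by_cases hj : j = i0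
        · subst hj
          simp [Function.update_self, hv]
        · simp [Function.update_of_ne hj, hj]
      rw [this, Finset.card_erase_of_mem hi0, hk]
      omega
    have hmem1 : y1 ∈ convexHull ℝ (toReal '' {x : Fin n → ℤ | ∀ i, lo i ≤ x i ∧ x i ≤ hi i}) := by
      apply ih _ (hcard _ ⟨f, rfl⟩)
      intro i
      by_cases hj : i = i0
      · subst hj
        simp only [hy1, Function.update_self]
        constructor
        · exact_mod_cast hlof
        · have : (f : ℝ) + 1 ≤ (hi i : ℝ) := by exact_mod_cast hfhi
          linarith
      · simp only [hy1, Function.update_of_ne hj]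
        exact hy i
    have hmem2 : y2 ∈ convexHull ℝ (toReal '' {x : Fin n → ℤ | ∀ i, lo i ≤ x i ∧ x i ≤ hi i}) := by
      apply ih _ (hcard _ ⟨f + 1, by push_cast; ring⟩)
      intro i
      by_cases hj : i = i0
      · subst hj
        simp only [hy2, Function.update_self]
        constructor
        · have : (lo i : ℝ) ≤ (f : ℝ) := by exact_mod_cast hlof
          linarith
        · exact_mod_cast hfhi
      · simp only [hy2, Function.update_of_ne hj]
        exact hy i
    -- y = θ • y1 + (1 - θ) • y2 with θ = f + 1 - y i0
    set θ := (f : ℝ) + 1 - y i0 with hθ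
    have hθ0 : 0 ≤ θ := by linarith
    have hθ1 : 1 - θ ≥ 0 := by linarith
    have hyeq : y = θ • y1 + (1 - θ) • y2 := by
      funext j
      by_cases hj : j = i0
      · subst hj
        simp only [Pi.add_apply, Pi.smul_apply, hy1, hy2, Function.update_self, smul_eq_mul]
        ring
      · simp only [Pi.add_apply, Pi.smul_apply, hy1, hy2, Function.update_of_ne hj, smul_eq_mul]
        ring
    rw [hyeq]
    exact (convex_convexHull ℝ _) hmem1 hmem2 hθ0 hθ1 (by ring)

/-- in the two-knapsack setting with `γ_n ≤ θ_n − 2`, the convex hull of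
`K^≤ ∩ K^≥` equals the union `{x ∈ conv K^≤ : x_n ≥ γ_n + 1} ∪
{x ∈ conv K^≥ : x_n ≤ θ_n − 1}`, and this set equals `conv K^≤ ∩ conv K^≥`. -/
theorem stmt_16 {n : ℕ} (hn : 1 ≤ n)
    (a w u : Fin n → ℤ)
    (ha : ∀ i, 0 < a i) (hw : ∀ i, 0 < w i) (hu : ∀ i, 1 ≤ u i)
    (hsia : ∀ i j : Fin n, (j : ℕ) = (i : ℕ) + 1 →
      ∑ k ∈ Finset.Iic i, a k * u k ≤ a j)
    (hsiw : ∀ i j : Fin n, (j : ℕ) = (i : ℕ) + 1 →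
      ∑ k ∈ Finset.Iic i, w k * u k ≤ w j)
    (b d : ℤ) (hb : 0 < b) (hd : 0 < d)
    (hub : ∀ i, a i * u i ≤ b) (hdle : d ≤ ∑ i, w i * u i)
    (hgt : b < ∑ i, a i * u i)
    (θ : Fin n → ℤ)
    (hθ : ∀ i : Fin n,
      θ i = min (u i) ((b - ∑ k ∈ Finset.Ioi i, a k * θ k).fdiv (a i)))
    (γ : Fin n → ℤ)
    (hγ : ∀ i : Fin n, γ i = u i - min (u i)
      (((∑ k, w k * u k) - d - ∑ k ∈ Finset.Ioi i, w k * (u k - γ k)).fdiv (w i)))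
    (lst : Fin n) (hlst : (lst : ℕ) = n - 1)
    (h1 : d ≤ ∑ i ∈ Finset.Iio lst, w i * u i + (θ lst - 1) * w lst)
    (h2 : γ lst ≤ θ lst - 2) :
    convexHull ℝ (toReal ''
        {x : Fin n → ℤ | (∀ i, 0 ≤ x i ∧ x i ≤ u i) ∧
          ∑ i, a i * x i ≤ b ∧ d ≤ ∑ i, w i * x i}) =
      ({y : Fin n → ℝ | y ∈ convexHull ℝ (toReal ''
            {x : Fin n → ℤ | (∀ i, 0 ≤ x i ∧ x i ≤ u i) ∧ ∑ i, a i * x i ≤ b}) ∧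
          (γ lst : ℝ) + 1 ≤ y lst} ∪
        {y : Fin n → ℝ | y ∈ convexHull ℝ (toReal ''
            {x : Fin n → ℤ | (∀ i, 0 ≤ x i ∧ x i ≤ u i) ∧ d ≤ ∑ i, w i * x i}) ∧
          y lst ≤ (θ lst : ℝ) - 1}) ∧
    ({y : Fin n → ℝ | y ∈ convexHull ℝ (toReal ''
          {x : Fin n → ℤ | (∀ i, 0 ≤ x i ∧ x i ≤ u i) ∧ ∑ i, a i * x i ≤ b}) ∧
        (γ lst : ℝ) + 1 ≤ y lst} ∪
      {y : Fin n → ℝ | y ∈ convexHull ℝ (toReal ''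
          {x : Fin n → ℤ | (∀ i, 0 ≤ x i ∧ x i ≤ u i) ∧ d ≤ ∑ i, w i * x i}) ∧
        y lst ≤ (θ lst : ℝ) - 1}) =
      convexHull ℝ (toReal ''
          {x : Fin n → ℤ | (∀ i, 0 ≤ x i ∧ x i ≤ u i) ∧ ∑ i, a i * x i ≤ b}) ∩
        convexHull ℝ (toReal ''
          {x : Fin n → ℤ | (∀ i, 0 ≤ x i ∧ x i ≤ u i) ∧ d ≤ ∑ i, w i * x i}) := by
  classical
  -- index facts
  have hlt : ∀ j : Fin n, (j : ℕ) ≤ (lst : ℕ) := fun j => by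
    have := j.isLt; omega
  have hIoi : Finset.Ioi lst = (∅ : Finset (Fin n)) := by
    apply Finset.eq_empty_iff_forall_notMem.mpr
    intro j hj
    rw [Finset.mem_Ioi, Fin.lt_def] at hj
    have := hlt j
    omega
  have herase : Finset.univ.erase lst = Finset.Iio lst := by
    ext j
    simp only [Finset.mem_erase, Finset.mem_univ, and_true, Finset.mem_Iio]
    rw [Fin.lt_def]
    constructor
    · intro h
      rcases lt_or_eq_of_le (hlt j) with h3 | h3
      · exact h3
      · exact absurd (Fin.ext h3) h
    · intro h hcon
      rw [hcon] at h
      omega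
  have hsplit : ∀ (c z : Fin n → ℤ), ∑ i, c i * z i
      = ∑ i ∈ Finset.Iio lst, c i * z i + c lst * z lst := by
    intro c z
    rw [← Finset.sum_erase_add Finset.univ _ (Finset.mem_univ lst), herase]
  have hF1 : ∀ c : Fin n → ℤ,
      (∀ i j : Fin n, (j : ℕ) = (i : ℕ) + 1 → ∑ k ∈ Finset.Iic i, c k * u k ≤ c j) →
      0 < c lst → ∑ i ∈ Finset.Iio lst, c i * u i ≤ c lst := by
    intro c hsi hc
    rcases Nat.eq_zero_or_pos (lst : ℕ) with h0 | h0
    · have hemp : Finset.Iio lst = (∅ : Finset (Fin n)) := by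
        apply Finset.eq_empty_iff_forall_notMem.mpr
        intro j hj
        rw [Finset.mem_Iio, Fin.lt_def] at hj
        omega
      rw [hemp]
      simpa using hc.le
    · have hlt1 : (lst : ℕ) - 1 < n := by omega
      have heq : Finset.Iic (⟨(lst : ℕ) - 1, hlt1⟩ : Fin n) = Finset.Iio lst := by
        ext j
        simp only [Finset.mem_Iic, Finset.mem_Iio]
        rw [Fin.le_def, Fin.lt_def]
        simp only
        omega
      have h5 := hsi ⟨(lst : ℕ) - 1, hlt1⟩ lst (by simp; omega)
      rw [heq] at h5
      exact h5
  have hF1a : ∑ i ∈ Finset.Iio lst, a i * u i ≤ a lst := hF1 a hsia (ha lst)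
  have hF1w : ∑ i ∈ Finset.Iio lst, w i * u i ≤ w lst := hF1 w hsiw (hw lst)
  -- θ and γ at lst
  have hθl : θ lst = u lst := by
    have h := hθ lst
    rw [hIoi] at h
    simp only [Finset.sum_empty, sub_zero] at h
    rw [h, min_eq_left]
    rw [Int.fdiv_eq_ediv_of_nonneg _ (ha lst).le, Int.le_ediv_iff_mul_le (ha lst), mul_comm]
    exact hub lst
  have hγl : γ lst = u lst - min (u lst) (((∑ k, w k * u k) - d).fdiv (w lst)) := by
    have h := hγ lst
    rw [hIoi] at h
    simpa using h
  set q : ℤ := ((∑ k, w k * u k) - d).fdiv (w lst) with hqd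
  have hqle : w lst * q ≤ (∑ k, w k * u k) - d := by
    rw [hqd, Int.fdiv_eq_ediv_of_nonneg _ (hw lst).le, mul_comm]
    exact Int.ediv_mul_le _ (ne_of_gt (hw lst))
  have hγ0 : 0 ≤ γ lst := by
    have := min_le_left (u lst) q
    omega
  have hγq : u lst - q ≤ γ lst := by
    have := min_le_right (u lst) q
    omega
  have hγu : γ lst + 1 ≤ u lst - 1 := by rw [hθl] at h2; omega
  have hdw : d ≤ w lst * (γ lst + 1) := by
    have hW := hsplit w u
    have h5 : w lst * u lst - w lst * q ≤ w lst * γ lst := by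
      have h6 := mul_le_mul_of_nonneg_left hγq (hw lst).le
      nlinarith [h6]
    have hg : w lst * (γ lst + 1) = w lst * γ lst + w lst := by ring
    linarith [hF1w, hqle, h5, hg]
  -- membership lemmas
  have hK1mem : ∀ z : Fin n → ℤ, (∀ i, 0 ≤ z i ∧ z i ≤ u i) → z lst ≤ u lst - 1 →
      ∑ i, a i * z i ≤ b := by
    intro z hz hzl
    rw [hsplit a z]
    have hS : ∑ i ∈ Finset.Iio lst, a i * z i ≤ ∑ i ∈ Finset.Iio lst, a i * u i :=
      Finset.sum_le_sum fun i _ => mul_le_mul_of_nonneg_left (hz i).2 (ha i).le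
    have h6 : a lst * z lst ≤ a lst * (u lst - 1) := mul_le_mul_of_nonneg_left hzl (ha lst).le
    have h7 : a lst * (u lst - 1) = a lst * u lst - a lst := by ring
    linarith [hF1a, hub lst]
  have hK2mem : ∀ z : Fin n → ℤ, (∀ i, 0 ≤ z i ∧ z i ≤ u i) → γ lst + 1 ≤ z lst →
      d ≤ ∑ i, w i * z i := by
    intro z hz hzl
    rw [hsplit w z]
    have hS : 0 ≤ ∑ i ∈ Finset.Iio lst, w i * z i :=
      Finset.sum_nonneg fun i _ => mul_nonneg (hw i).le (hz i).1
    have h6 : w lst * (γ lst + 1) ≤ w lst * z lst := mul_le_mul_of_nonneg_left hzl (hw lst).le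
    linarith [hdw]
  -- box/update helpers
  have hupd_box : ∀ (z : Fin n → ℤ) (v : ℤ), (∀ i, 0 ≤ z i ∧ z i ≤ u i) → 0 ≤ v →
      v ≤ u lst → ∀ i, 0 ≤ Function.update z lst v i ∧ Function.update z lst v i ≤ u i := by
    intro z v hz hv0 hvu i
    by_cases h : i = lst
    · subst h
      rw [Function.update_self]
      exact ⟨hv0, hvu⟩
    · rw [Function.update_of_ne h]
      exact hz i
  set K : Set (Fin n → ℤ) := {x : Fin n → ℤ | (∀ i, 0 ≤ x i ∧ x i ≤ u i) ∧
      ∑ i, a i * x i ≤ b ∧ d ≤ ∑ i, w i * x i} with hKdef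
  set K1 : Set (Fin n → ℤ) := {x : Fin n → ℤ | (∀ i, 0 ≤ x i ∧ x i ≤ u i) ∧
      ∑ i, a i * x i ≤ b} with hK1def
  set K2 : Set (Fin n → ℤ) := {x : Fin n → ℤ | (∀ i, 0 ≤ x i ∧ x i ≤ u i) ∧
      d ≤ ∑ i, w i * x i} with hK2def
  have hmemK : ∀ (z : Fin n → ℤ) (v : ℤ), (∀ i, 0 ≤ z i ∧ z i ≤ u i) → γ lst + 1 ≤ v →
      v ≤ u lst - 1 → Function.update z lst v ∈ K := by
    intro z v hz h1v h2v
    have hbox := hupd_box z v hz (by omega) (by omega)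
    refine ⟨hbox, hK1mem _ hbox ?_, hK2mem _ hbox ?_⟩ <;> rw [Function.update_self] <;> omega
  -- real box
  set RBox : Set (Fin n → ℝ) := {y : Fin n → ℝ | ∀ i, 0 ≤ y i ∧ y i ≤ (u i : ℝ)} with hRBoxdef
  have hRBoxconv : Convex ℝ RBox := by
    intro x hx y hy s t hs ht hst
    intro i
    simp only [Pi.add_apply, Pi.smul_apply, smul_eq_mul]
    constructor
    · exact add_nonneg (mul_nonneg hs (hx i).1) (mul_nonneg ht (hy i).1)
    · calc s * x i + t * y i ≤ s * (u i : ℝ) + t * (u i : ℝ) :=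
            add_le_add (mul_le_mul_of_nonneg_left (hx i).2 hs)
              (mul_le_mul_of_nonneg_left (hy i).2 ht)
        _ = (u i : ℝ) := by rw [← add_mul, hst, one_mul]
  have hsub1 : convexHull ℝ (toReal '' K1) ⊆ RBox := by
    apply convexHull_min _ hRBoxconv
    rintro _ ⟨z, hz, rfl⟩ i
    simp only [toReal]
    exact ⟨by exact_mod_cast (hz.1 i).1, by exact_mod_cast (hz.1 i).2⟩
  have hsub2 : convexHull ℝ (toReal '' K2) ⊆ RBox := by
    apply convexHull_min _ hRBoxconv
    rintro _ ⟨z, hz, rfl⟩ i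
    simp only [toReal]
    exact ⟨by exact_mod_cast (hz.1 i).1, by exact_mod_cast (hz.1 i).2⟩
  -- box-hull inclusions
  have hA2 : ∀ y : Fin n → ℝ, y ∈ RBox → (γ lst : ℝ) + 1 ≤ y lst →
      y ∈ convexHull ℝ (toReal '' K2) := by
    intro y hyB hyl
    have h := boxHull (fun i => if i = lst then γ lst + 1 else 0) u y ?_
    · refine convexHull_mono (Set.image_mono ?_) h
      intro x hx
      have hbox : ∀ i, 0 ≤ x i ∧ x i ≤ u i := by
        intro i
        refine ⟨?_, (hx i).2⟩
        have := (hx i).1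
        by_cases hi : i = lst
        · rw [hi] at this ⊢
          simp only [if_pos rfl] at this
          omega
        · rw [if_neg hi] at this
          exact this
      have hlstge : γ lst + 1 ≤ x lst := by
        have := (hx lst).1
        simpa using this
      exact ⟨hbox, hK2mem x hbox hlstge⟩
    · intro i
      by_cases hi : i = lst
      · subst hi
        simp only [if_pos rfl]
        refine ⟨?_, (hyB i).2⟩
        push_cast
        exact hyl
      · simp only [if_neg hi]
        exact_mod_cast hyB i
  have hB1 : ∀ y : Fin n → ℝ, y ∈ RBox → y lst ≤ (u lst : ℝ) - 1 →
      y ∈ convexHull ℝ (toReal '' K1) := by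
    intro y hyB hyl
    have h := boxHull (fun _ => 0) (fun i => if i = lst then u lst - 1 else u i) y ?_
    · refine convexHull_mono (Set.image_mono ?_) h
      intro x hx
      have hbox : ∀ i, 0 ≤ x i ∧ x i ≤ u i := by
        intro i
        refine ⟨(hx i).1, ?_⟩
        have := (hx i).2
        by_cases hi : i = lst
        · rw [hi] at this ⊢
          simp only [if_pos rfl] at this
          omega
        · rw [if_neg hi] at this
          exact this
      have hlstle : x lst ≤ u lst - 1 := by
        have := (hx lst).2
        simpa using this
      exact ⟨hbox, hK1mem x hbox hlstle⟩
    · intro i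
      by_cases hi : i = lst
      · subst hi
        simp only [if_pos rfl]
        refine ⟨by exact_mod_cast (hyB i).1, ?_⟩
        push_cast
        exact hyl
      · simp only [if_neg hi]
        exact_mod_cast hyB i
  set A : Set (Fin n → ℝ) := {y : Fin n → ℝ | y ∈ convexHull ℝ (toReal '' K1) ∧
      (γ lst : ℝ) + 1 ≤ y lst} with hAdef
  set B : Set (Fin n → ℝ) := {y : Fin n → ℝ | y ∈ convexHull ℝ (toReal '' K2) ∧
      y lst ≤ (θ lst : ℝ) - 1} with hBdef
  have e2 : A ∪ B = convexHull ℝ (toReal '' K1) ∩ convexHull ℝ (toReal '' K2) := by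
    apply Set.Subset.antisymm
    · rintro y (⟨hy1, hyl⟩ | ⟨hy2, hyl⟩)
      · exact ⟨hy1, hA2 y (hsub1 hy1) hyl⟩
      · refine ⟨hB1 y (hsub2 hy2) ?_, hy2⟩
        rw [hθl] at hyl
        exact hyl
    · rintro y ⟨hy1, hy2⟩
      by_cases hc : (γ lst : ℝ) + 1 ≤ y lst
      · exact Or.inl ⟨hy1, hc⟩
      · refine Or.inr ⟨hy2, ?_⟩
        push_neg at hc
        have h8 : ((γ lst : ℝ) + 1) ≤ (θ lst : ℝ) - 1 := by
          exact_mod_cast (by omega : γ lst + 1 ≤ θ lst - 1)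
        linarith
  have hKK1 : K ⊆ K1 := fun x hx => ⟨hx.1, hx.2.1⟩
  have hKK2 : K ⊆ K2 := fun x hx => ⟨hx.1, hx.2.2⟩
  have e1 : convexHull ℝ (toReal '' K) = A ∪ B := by
    apply Set.Subset.antisymm
    · rw [e2]
      exact Set.subset_inter (convexHull_mono (Set.image_mono hKK1))
        (convexHull_mono (Set.image_mono hKK2))
    · rintro y (⟨hy1, hyl⟩ | ⟨hy2, hyl⟩)
      · refine push1 lst (convex_convexHull ℝ _) ((γ lst : ℝ) + 1)
          (fun x => max (x lst) ((u lst : ℝ) - 1)) ?_ ?_ ?_ hy1 hyl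
        · rintro _ ⟨z, hz, rfl⟩
          exact le_max_left _ _
        · rintro _ ⟨z, hz, rfl⟩
          have hc : ((γ lst : ℝ) + 1) = ((γ lst + 1 : ℤ) : ℝ) := by push_cast; ring
          rw [hc, ← toReal_update]
          exact subset_convexHull ℝ _ ⟨_, hmemK z _ hz.1 le_rfl hγu, rfl⟩
        · rintro _ ⟨z, hz, rfl⟩
          have hc : max (toReal z lst) ((u lst : ℝ) - 1)
              = ((max (z lst) (u lst - 1) : ℤ) : ℝ) := by
            simp only [toReal]
            push_cast
            rfl
          show Function.update (toReal z) lst (max (toReal z lst) ((u lst : ℝ) - 1)) ∈ _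
          rw [hc, ← toReal_update]
          apply subset_convexHull ℝ _
          refine ⟨_, ?_, rfl⟩
          rcases max_cases (z lst) (u lst - 1) with ⟨hveq, hge⟩ | ⟨hveq, hlt⟩
          · rw [hveq, Function.update_eq_self]
            exact ⟨hz.1, hz.2, hK2mem z hz.1 (by omega)⟩
          · rw [hveq]
            exact hmemK z _ hz.1 (by omega) (by omega)
      · rw [hθl] at hyl
        refine push2 lst (convex_convexHull ℝ _) ((u lst : ℝ) - 1)
          (fun x => min (x lst) ((γ lst : ℝ) + 1)) ?_ ?_ ?_ hy2 hyl
        · rintro _ ⟨z, hz, rfl⟩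
          exact min_le_left _ _
        · rintro _ ⟨z, hz, rfl⟩
          have hc : min (toReal z lst) ((γ lst : ℝ) + 1)
              = ((min (z lst) (γ lst + 1) : ℤ) : ℝ) := by
            simp only [toReal]
            push_cast
            rfl
          show Function.update (toReal z) lst (min (toReal z lst) ((γ lst : ℝ) + 1)) ∈ _
          rw [hc, ← toReal_update]
          apply subset_convexHull ℝ _
          refine ⟨_, ?_, rfl⟩
          rcases min_cases (z lst) (γ lst + 1) with ⟨hveq, hle⟩ | ⟨hveq, hlt⟩
          · rw [hveq, Function.update_eq_self]
            exact ⟨hz.1, hK1mem z hz.1 (by omega), hz.2⟩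
          · rw [hveq]
            exact hmemK z _ hz.1 le_rfl hγu
        · rintro _ ⟨z, hz, rfl⟩
          have hc : ((u lst : ℝ) - 1) = ((u lst - 1 : ℤ) : ℝ) := by push_cast; ring
          rw [hc, ← toReal_update]
          exact subset_convexHull ℝ _ ⟨_, hmemK z _ hz.1 (by omega) le_rfl, rfl⟩
  exact ⟨e1, e2⟩
end

section
/- Assume {(a_i,u_i)}_{i=1}^n is superincreasing and a_i u_i ≤ b for all i. Then for every j ∈ {1,…,n−1} and all s, i ∈ I_j with s < i, one has the identity φ_j(i) = φ_j(s) · (1 + ∑_{k ∈ I_j, s ≤ k < i} φ_k(i)). -/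
private lemma aux_prod {α : Type*} [LinearOrder α] (F : Finset α) (c : α → ℤ) :
    ∏ k ∈ F, (c k + 1) =
      1 + ∑ k ∈ F, c k * ∏ l ∈ F.filter (fun l => k < l), (c l + 1) := by
  classical
  induction F using Finset.induction_on_min with
  | empty => simp
  | insert a s has ih =>
    have ha : a ∉ s := fun h => lt_irrefl a (has a h)
    rw [Finset.prod_insert ha, Finset.sum_insert ha]
    have h1 : (insert a s).filter (fun l => a < l) = s := by
      rw [Finset.filter_insert, if_neg (lt_irrefl a)]
      exact Finset.filter_true_of_mem fun x hx => has x hx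
    have h2 : ∀ k ∈ s, c k * ∏ l ∈ (insert a s).filter (fun l => k < l), (c l + 1)
        = c k * ∏ l ∈ s.filter (fun l => k < l), (c l + 1) := by
      intro k hk
      rw [Finset.filter_insert, if_neg (not_lt.2 (has k hk).le)]
    rw [h1, Finset.sum_congr rfl h2, ih]
    ring

/-- the multiplicative identity
`φ_j(i) = φ_j(s) · (1 + ∑_{k ∈ I_j, s ≤ k < i} φ_k(i))` for `s, i ∈ I_j` with `s < i`.
Indices are `Fin n` (0-based), so "`j ∈ {1,…,n−1}`" reads `(j : ℕ) + 1 < n`. -/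
theorem stmt_17 {n : ℕ} (hn : 1 ≤ n)
    (a u : Fin n → ℤ) (ha : ∀ i, 0 < a i) (hu : ∀ i, 1 ≤ u i)
    (b : ℤ) (hb : 0 < b)
    (hub : ∀ i, a i * u i ≤ b)
    (hsi : ∀ i j : Fin n, (j : ℕ) = (i : ℕ) + 1 →
      ∑ k ∈ Finset.Iic i, a k * u k ≤ a j)
    (θ : Fin n → ℤ)
    (hθ : ∀ i : Fin n,
      θ i = min (u i) ((b - ∑ k ∈ Finset.Ioi i, a k * θ k).fdiv (a i)))
    (φ : Fin n → Fin n → ℤ)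
    (hφ : ∀ j i : Fin n, φ j i =
      (u j - θ j) * ∏ k ∈ (Finset.Ioo j i).filter (fun k => 1 ≤ θ k), (u k + 1 - θ k)) :
    ∀ j s i : Fin n, (j : ℕ) + 1 < n →
      j < s → 1 ≤ θ s → j < i → 1 ≤ θ i → s < i →
      φ j i = φ j s *
        (1 + ∑ k ∈ (Finset.Ico s i).filter (fun k => 1 ≤ θ k), φ k i) := by
  intro j s i hjn hjs hθs hji hθi hsi'
  classical
  have hsplit : Finset.Ioo j i = Finset.Ioo j s ∪ Finset.Ico s i := by
    ext x
    simp only [Finset.mem_Ioo, Finset.mem_Ico, Finset.mem_union, Fin.lt_def, Fin.le_def]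
    have := hjs
    have := hsi'
    simp only [Fin.lt_def] at this ⊢
    omega
  have hdisj : Disjoint ((Finset.Ioo j s).filter (fun k => 1 ≤ θ k))
      ((Finset.Ico s i).filter (fun k => 1 ≤ θ k)) := by
    rw [Finset.disjoint_left]
    intro x hx hx'
    simp only [Finset.mem_filter, Finset.mem_Ioo, Finset.mem_Ico] at hx hx'
    exact absurd hx'.1.1 (not_le.2 hx.1.2)
  set F := (Finset.Ico s i).filter (fun k => 1 ≤ θ k) with hF
  set c : Fin n → ℤ := fun k => u k - θ k with hc
  have key : ∏ k ∈ F, (u k + 1 - θ k) = 1 + ∑ k ∈ F, φ k i := by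
    have e1 : ∏ k ∈ F, (u k + 1 - θ k) = ∏ k ∈ F, (c k + 1) :=
      Finset.prod_congr rfl fun k _ => by simp [hc]; ring
    rw [e1, aux_prod F c]
    congr 1
    refine Finset.sum_congr rfl fun k hk => ?_
    simp only [hF, Finset.mem_filter, Finset.mem_Ico] at hk
    have hfe : F.filter (fun l => k < l) = (Finset.Ioo k i).filter (fun l => 1 ≤ θ l) := by
      ext x
      simp only [hF, Finset.mem_filter, Finset.mem_Ico, Finset.mem_Ioo]
      constructor
      · rintro ⟨⟨⟨_, h2⟩, h3⟩, h4⟩; exact ⟨⟨h4, h2⟩, h3⟩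
      · rintro ⟨⟨h1, h2⟩, h3⟩; exact ⟨⟨⟨le_trans hk.1.1 h1.le, h2⟩, h3⟩, h1⟩
    rw [hφ k i, hfe]
    congr 1
    exact Finset.prod_congr rfl fun l _ => by simp [hc]; ring
  rw [hφ j i, hφ j s, hsplit, Finset.filter_union, Finset.prod_union hdisj, key]
  ring
end

section
/- In the two-knapsack setting, assume additionally that ∑_{i=1}^{n−1} w_i u_i + (θ_n − 1)·w_n ≥ d and γ_n = θ_n − 1. Let m = max{i ∈ I : i < n} if I contains an index smaller than n, and m = 0 otherwise, where I = {i : θ_i ≥ 1}. Let ε ∈ (0,1) and let x ∈ ℝⁿ with 0 ≤ x_i ≤ u_i for all i and x_n = θ_n − ε. Define δ ∈ ℝⁿ by δ_i = min(ε·u_i, x_i) for i ≤ m and δ_i = x_i for m < i ≤ n. Then for every j ∈ {1,…,n−1}: (1) if x ∈ conv(K^≤), then x_j − δ_j − θ_j(1−ε) + ∑_{i ∈ I_j, i < n} φ_j(i)·(x_i − δ_i − θ_i(1−ε)) ≤ 0; (2) if x ∈ conv(K^≥), then δ_j + ∑_{i ∈ T_j, i < n} Φ_j(i)·δ_i ≥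 ε·Φ_j(n). -/
open Finset

/-- Downward (reverse) induction on `Fin n`. -/
lemma revInd {n : ℕ} (P : Fin n → Prop) (step : ∀ i, (∀ j, i < j → P j) → P i) : ∀ i, P i := by
  have : WellFoundedGT (Fin n) := inferInstance
  intro i
  exact this.wf.induction (C := P) i (fun x h => step x (fun j hj => h j hj))

/-- Split a sum over all of `Fin n` at an index `t`. -/
lemma sum_split {n : ℕ} {M : Type*} [AddCommMonoid M] (f : Fin n → M) (t : Fin n) :
    ∑ k, f k = (∑ k ∈ Finset.Iio t, f k) + f t + ∑ k ∈ Finset.Ioi t, f k := by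
  classical
  have h : (Finset.univ : Finset (Fin n)) = Finset.Iio t ∪ insert t (Finset.Ioi t) := by
    ext k
    simp only [Finset.mem_univ, Finset.mem_union, Finset.mem_insert, Finset.mem_Iio,
      Finset.mem_Ioi, true_iff]
    rcases lt_trichotomy k t with h | h | h
    · exact Or.inl h
    · exact Or.inr (Or.inl h)
    · exact Or.inr (Or.inr h)
  have hdisj : Disjoint (Finset.Iio t) (insert t (Finset.Ioi t)) := by
    rw [Finset.disjoint_left]
    intro k hk hk'
    rw [Finset.mem_Iio] at hk
    rcases Finset.mem_insert.mp hk' with h | h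
    · exact absurd h (ne_of_lt hk)
    · exact absurd (lt_trans hk (Finset.mem_Ioi.mp h)) (lt_irrefl k)
  rw [h, Finset.sum_union hdisj, Finset.sum_insert (by simp), add_assoc]

/-- Split a sum over a finset at an element `t` of it. -/
lemma sum_split_filter {n : ℕ} {M : Type*} [AddCommMonoid M] (f : Fin n → M)
    (S : Finset (Fin n)) (t : Fin n) (ht : t ∈ S) :
    ∑ k ∈ S, f k = (∑ k ∈ S.filter (· < t), f k) + f t
      + ∑ k ∈ S.filter (fun k => t < k), f k := by
  classical
  rw [← Finset.sum_filter_add_sum_filter_not S (· < t) f]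
  have h : S.filter (fun k => ¬ k < t) = insert t (S.filter (fun k => t < k)) := by
    ext k
    simp only [Finset.mem_filter, Finset.mem_insert, not_lt]
    constructor
    · rintro ⟨hkS, hk⟩
      rcases eq_or_lt_of_le hk with h | h
      · exact Or.inl h.symm
      · exact Or.inr ⟨hkS, h⟩
    · rintro (rfl | ⟨hkS, h⟩)
      · exact ⟨ht, le_refl _⟩
      · exact ⟨hkS, le_of_lt h⟩
  rw [h, Finset.sum_insert (by simp)]
  abel

/-- Telescoping product-sum identity. -/
lemma telescope {n : ℕ} (g : Fin n → ℤ) (S : Finset (Fin n)) :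
    ∑ i ∈ S, (∏ k ∈ S.filter (· < i), g k) * (g i - 1) = ∏ k ∈ S, g k - 1 := by
  classical
  induction S using Finset.induction_on_max with
  | empty => simp
  | insert a s ha ih =>
    have hanotmem : a ∉ s := fun h => absurd (ha a h) (lt_irrefl a)
    rw [Finset.sum_insert hanotmem, Finset.prod_insert hanotmem]
    have h1 : (insert a s).filter (· < a) = s := by
      ext k
      simp only [Finset.mem_filter, Finset.mem_insert]
      constructor
      · rintro ⟨h | h, hk⟩
        · exact absurd hk (by simp [h])
        · exact h
      · intro h
        exact ⟨Or.inr h, ha k h⟩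
    have h2 : ∀ i ∈ s, (insert a s).filter (· < i) = s.filter (· < i) := by
      intro i hi
      rw [Finset.filter_insert, if_neg (not_lt.mpr (le_of_lt (ha i hi)))]
    rw [Finset.sum_congr rfl (fun i hi => by rw [h2 i hi]), ih, h1]
    ring

/-- Filter compatibility for `Ioo` intervals. -/
lemma Ioo_filter_eq {n : ℕ} (P : Fin n → Prop) [DecidablePred P] (j lst i : Fin n)
    (hi : i ≤ lst) :
    ((Finset.Ioo j lst).filter P).filter (· < i) = (Finset.Ioo j i).filter P := by
  ext k
  simp only [Finset.mem_filter, Finset.mem_Ioo]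
  constructor
  · rintro ⟨⟨⟨h1, _⟩, hP⟩, h3⟩
    exact ⟨⟨h1, h3⟩, hP⟩
  · rintro ⟨⟨h1, h3⟩, hP⟩
    exact ⟨⟨⟨h1, lt_of_lt_of_le h3 hi⟩, hP⟩, h3⟩

lemma lemA {n : ℕ} (u θ z : Fin n → ℤ) (φ : Fin n → Fin n → ℤ)
    (hφ : ∀ j i : Fin n, φ j i =
      (u j - θ j) * ∏ k ∈ (Finset.Ioo j i).filter (fun k => 1 ≤ θ k), (u k + 1 - θ k))
    (j lst : Fin n) (hTop : ∀ k, k ≤ lst)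
    (hz0 : ∀ i, 0 ≤ z i) (hzu : ∀ i, z i ≤ u i) (hθu : ∀ i, θ i ≤ u i)
    (hlex : ∀ t, (∀ k, t < k → z k = θ k) → z t ≤ θ t)
    (hzlst : z lst = θ lst) :
    z j + ∑ i ∈ (Finset.Ioo j lst).filter (fun k => 1 ≤ θ k), φ j i * z i ≤
      θ j + ∑ i ∈ (Finset.Ioo j lst).filter (fun k => 1 ≤ θ k), φ j i * θ i := by
  classical
  set F := (Finset.Ioo j lst).filter (fun k => 1 ≤ θ k) with hF
  have hφ0 : ∀ i, 0 ≤ φ j i := by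
    intro i
    rw [hφ]
    apply mul_nonneg (by linarith [hθu j])
    apply Finset.prod_nonneg
    intro k _
    linarith [hθu k]
  by_cases hD : ∀ k ∈ Finset.Ioo j lst, z k = θ k
  · have hzj : z j ≤ θ j := by
      apply hlex
      intro k hk
      rcases eq_or_lt_of_le (hTop k) with h | h
      · rw [h]; exact hzlst
      · exact hD k (Finset.mem_Ioo.mpr ⟨hk, h⟩)
    have heq : ∑ i ∈ F, φ j i * z i = ∑ i ∈ F, φ j i * θ i :=
      Finset.sum_congr rfl (fun i hi => by rw [hD i (Finset.mem_filter.mp hi).1])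
    linarith
  · push_neg at hD
    obtain ⟨t₀, ht₀, hne₀⟩ := hD
    have hDne : ((Finset.Ioo j lst).filter (fun k => z k ≠ θ k)).Nonempty :=
      ⟨t₀, Finset.mem_filter.mpr ⟨ht₀, hne₀⟩⟩
    set t := ((Finset.Ioo j lst).filter (fun k => z k ≠ θ k)).max' hDne with ht
    have htmem' := Finset.max'_mem _ hDne
    rw [Finset.mem_filter, Finset.mem_Ioo] at htmem'
    obtain ⟨⟨hjt, htlst⟩, htne⟩ := htmem'
    have hgt : ∀ k, t < k → z k = θ k := by
      intro k hk
      rcases eq_or_lt_of_le (hTop k) with h | h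
      · rw [h]; exact hzlst
      · by_contra hzk
        have hkmem : k ∈ (Finset.Ioo j lst).filter (fun k => z k ≠ θ k) :=
          Finset.mem_filter.mpr ⟨Finset.mem_Ioo.mpr ⟨lt_trans hjt hk, h⟩, hzk⟩
        exact absurd (Finset.le_max' _ k hkmem) (not_le.mpr hk)
    have hzt : z t ≤ θ t - 1 := by
      have h := hlex t hgt
      rcases lt_or_eq_of_le h with h | h
      · omega
      · exact absurd h htne
    have htF : t ∈ F := by
      rw [hF, Finset.mem_filter, Finset.mem_Ioo]
      exact ⟨⟨hjt, htlst⟩, by linarith [hz0 t]⟩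
    have hsplitz : ∑ i ∈ F, φ j i * z i = (∑ i ∈ F.filter (· < t), φ j i * z i)
        + φ j t * z t + ∑ i ∈ F.filter (fun k => t < k), φ j i * z i :=
      sum_split_filter (fun i => φ j i * z i) F t htF
    have hsplitθ : ∑ i ∈ F, φ j i * θ i = (∑ i ∈ F.filter (· < t), φ j i * θ i)
        + φ j t * θ t + ∑ i ∈ F.filter (fun k => t < k), φ j i * θ i :=
      sum_split_filter (fun i => φ j i * θ i) F t htF
    have hb1 : ∑ i ∈ F.filter (· < t), φ j i * z i ≤ ∑ i ∈ F.filter (· < t), φ j i * u i :=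
      Finset.sum_le_sum (fun i _ => mul_le_mul_of_nonneg_left (hzu i) (hφ0 i))
    have hb2 : φ j t * z t ≤ φ j t * (θ t - 1) := mul_le_mul_of_nonneg_left hzt (hφ0 t)
    have hb3 : ∑ i ∈ F.filter (fun k => t < k), φ j i * z i
        = ∑ i ∈ F.filter (fun k => t < k), φ j i * θ i :=
      Finset.sum_congr rfl (fun i hi => by rw [hgt i (Finset.mem_filter.mp hi).2])
    have e1 : ∀ i : Fin n, i ≤ lst →
        F.filter (· < i) = (Finset.Ioo j i).filter (fun k => 1 ≤ θ k) := by
      intro i hi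
      rw [hF]
      exact Ioo_filter_eq _ j lst i hi
    have e2 : ∀ i ∈ F.filter (· < t),
        (F.filter (· < t)).filter (· < i) = (Finset.Ioo j i).filter (fun k => 1 ≤ θ k) := by
      intro i hi
      have hit : i < t := (Finset.mem_filter.mp hi).2
      rw [← e1 i (le_of_lt (lt_of_lt_of_le hit (le_of_lt htlst)))]
      ext k
      simp only [Finset.mem_filter]
      constructor
      · rintro ⟨⟨hk1, _⟩, hk3⟩
        exact ⟨hk1, hk3⟩
      · rintro ⟨hk1, hk3⟩
        exact ⟨⟨hk1, lt_trans hk3 hit⟩, hk3⟩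
    have hkey : u j + ∑ i ∈ F.filter (· < t), φ j i * u i
        = θ j + ∑ i ∈ F.filter (· < t), φ j i * θ i + φ j t := by
      have tel := telescope (fun k => u k + 1 - θ k) (F.filter (· < t))
      have hs : ∑ i ∈ F.filter (· < t), φ j i * (u i - θ i)
          = (u j - θ j) * (∏ k ∈ F.filter (· < t), (u k + 1 - θ k) - 1) := by
        rw [← tel, Finset.mul_sum]
        apply Finset.sum_congr rfl
        intro i hi
        rw [hφ, ← e2 i hi]
        ring
      have hφt : φ j t = (u j - θ j) * ∏ k ∈ F.filter (· < t), (u k + 1 - θ k) := by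
        rw [hφ, ← e1 t (le_of_lt htlst)]
      have hsub : ∑ i ∈ F.filter (· < t), φ j i * (u i - θ i)
          = ∑ i ∈ F.filter (· < t), φ j i * u i - ∑ i ∈ F.filter (· < t), φ j i * θ i := by
        rw [← Finset.sum_sub_distrib]
        apply Finset.sum_congr rfl
        intro i _
        ring
      have h5 : ∑ i ∈ F.filter (· < t), φ j i * u i
          = ∑ i ∈ F.filter (· < t), φ j i * θ i
            + (u j - θ j) * (∏ k ∈ F.filter (· < t), (u k + 1 - θ k) - 1) := by
        linarith [hs, hsub]
      rw [h5, hφt]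
      ring
    have h6 : φ j t * (θ t - 1) = φ j t * θ t - φ j t := by ring
    rw [hsplitz, hsplitθ]
    linarith [hb1, hb2, hb3, hkey, hzu j, h6]


lemma lemB {n : ℕ} (u γ z : Fin n → ℤ) (Φ : Fin n → Fin n → ℤ)
    (hΦ : ∀ j i : Fin n, Φ j i =
      γ j * ∏ k ∈ (Finset.Ioo j i).filter (fun k => γ k + 1 ≤ u k), (γ k + 1))
    (j lst : Fin n) (hTop : ∀ k, k ≤ lst)
    (hz0 : ∀ i, 0 ≤ z i) (hzu : ∀ i, z i ≤ u i) (hγ0 : ∀ i, 0 ≤ γ i)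
    (hlex : ∀ t, (∀ k, t < k → z k = γ k) → γ t ≤ z t)
    (hzlst : z lst = γ lst) :
    Φ j lst ≤ z j + ∑ i ∈ (Finset.Ioo j lst).filter (fun k => γ k + 1 ≤ u k), Φ j i * z i := by
  classical
  set F := (Finset.Ioo j lst).filter (fun k => γ k + 1 ≤ u k) with hF
  have hΦ0 : ∀ i, 0 ≤ Φ j i := by
    intro i
    rw [hΦ]
    apply mul_nonneg (hγ0 j)
    apply Finset.prod_nonneg
    intro k _
    linarith [hγ0 k]
  have e1 : ∀ i : Fin n, i ≤ lst →
      F.filter (· < i) = (Finset.Ioo j i).filter (fun k => γ k + 1 ≤ u k) := by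
    intro i hi
    rw [hF]
    exact Ioo_filter_eq _ j lst i hi
  have hΦlst : Φ j lst = γ j * ∏ k ∈ F, (γ k + 1) := by
    rw [hΦ, hF]
  by_cases hD : ∀ k ∈ Finset.Ioo j lst, z k = γ k
  · have hzj : γ j ≤ z j := by
      apply hlex
      intro k hk
      rcases eq_or_lt_of_le (hTop k) with h | h
      · rw [h]; exact hzlst
      · exact hD k (Finset.mem_Ioo.mpr ⟨hk, h⟩)
    have heq : ∑ i ∈ F, Φ j i * z i = ∑ i ∈ F, Φ j i * γ i :=
      Finset.sum_congr rfl (fun i hi => by rw [hD i (Finset.mem_filter.mp hi).1])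
    -- identity: γ j + ∑_F Φγ = Φ j lst
    have tel := telescope (fun k => γ k + 1) F
    have hs : ∑ i ∈ F, Φ j i * γ i = γ j * (∏ k ∈ F, (γ k + 1) - 1) := by
      rw [← tel, Finset.mul_sum]
      apply Finset.sum_congr rfl
      intro i hi
      have hilst : i < lst := (Finset.mem_Ioo.mp (Finset.mem_filter.mp hi).1).2
      rw [hΦ, ← e1 i (le_of_lt hilst)]
      ring
    rw [heq, hs, hΦlst]
    linarith [hzj]
  · push_neg at hD
    obtain ⟨t₀, ht₀, hne₀⟩ := hD
    have hDne : ((Finset.Ioo j lst).filter (fun k => z k ≠ γ k)).Nonempty :=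
      ⟨t₀, Finset.mem_filter.mpr ⟨ht₀, hne₀⟩⟩
    set t := ((Finset.Ioo j lst).filter (fun k => z k ≠ γ k)).max' hDne with ht
    have htmem' := Finset.max'_mem _ hDne
    rw [Finset.mem_filter, Finset.mem_Ioo] at htmem'
    obtain ⟨⟨hjt, htlst⟩, htne⟩ := htmem'
    have hgt : ∀ k, t < k → z k = γ k := by
      intro k hk
      rcases eq_or_lt_of_le (hTop k) with h | h
      · rw [h]; exact hzlst
      · by_contra hzk
        have hkmem : k ∈ (Finset.Ioo j lst).filter (fun k => z k ≠ γ k) :=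
          Finset.mem_filter.mpr ⟨Finset.mem_Ioo.mpr ⟨lt_trans hjt hk, h⟩, hzk⟩
        exact absurd (Finset.le_max' _ k hkmem) (not_le.mpr hk)
    have hzt : γ t + 1 ≤ z t := by
      have h := hlex t hgt
      rcases lt_or_eq_of_le h with h | h
      · omega
      · exact absurd h.symm htne
    have htF : t ∈ F := by
      rw [hF, Finset.mem_filter, Finset.mem_Ioo]
      exact ⟨⟨hjt, htlst⟩, by linarith [hzu t]⟩
    have e2 : ∀ i ∈ F.filter (· < t),
        (F.filter (· < t)).filter (· < i) = (Finset.Ioo j i).filter (fun k => γ k + 1 ≤ u k) := by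
      intro i hi
      have hit : i < t := (Finset.mem_filter.mp hi).2
      rw [← e1 i (le_of_lt (lt_of_lt_of_le hit (le_of_lt htlst)))]
      ext k
      simp only [Finset.mem_filter]
      constructor
      · rintro ⟨⟨hk1, _⟩, hk3⟩
        exact ⟨hk1, hk3⟩
      · rintro ⟨hk1, hk3⟩
        exact ⟨⟨hk1, lt_trans hk3 hit⟩, hk3⟩
    have hsplitz : ∑ i ∈ F, Φ j i * z i = (∑ i ∈ F.filter (· < t), Φ j i * z i)
        + Φ j t * z t + ∑ i ∈ F.filter (fun k => t < k), Φ j i * z i :=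
      sum_split_filter (fun i => Φ j i * z i) F t htF
    have hsplitγ : ∑ i ∈ F, Φ j i * γ i = (∑ i ∈ F.filter (· < t), Φ j i * γ i)
        + Φ j t * γ t + ∑ i ∈ F.filter (fun k => t < k), Φ j i * γ i :=
      sum_split_filter (fun i => Φ j i * γ i) F t htF
    -- telescopes
    have telF := telescope (fun k => γ k + 1) F
    have telS := telescope (fun k => γ k + 1) (F.filter (· < t))
    have hsF : ∑ i ∈ F, Φ j i * γ i = γ j * (∏ k ∈ F, (γ k + 1) - 1) := by
      rw [← telF, Finset.mul_sum]
      apply Finset.sum_congr rfl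
      intro i hi
      have hilst : i < lst := (Finset.mem_Ioo.mp (Finset.mem_filter.mp hi).1).2
      rw [hΦ, ← e1 i (le_of_lt hilst)]
      ring
    have hsS : ∑ i ∈ F.filter (· < t), Φ j i * γ i
        = γ j * (∏ k ∈ F.filter (· < t), (γ k + 1) - 1) := by
      rw [← telS, Finset.mul_sum]
      apply Finset.sum_congr rfl
      intro i hi
      rw [hΦ, ← e2 i hi]
      ring
    have hΦt : Φ j t = γ j * ∏ k ∈ F.filter (· < t), (γ k + 1) := by
      rw [hΦ, ← e1 t (le_of_lt htlst)]
    -- identity: Φ j t * (γ t + 1) + ∑_{i>t} Φ γ = Φ j lst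
    have hkey : Φ j t * (γ t + 1) + ∑ i ∈ F.filter (fun k => t < k), Φ j i * γ i
        = Φ j lst := by
      -- ∑_{i>t} Φγ = ∑_F Φγ - ∑_{<t} Φγ - Φ t γ t
      have h7 : Φ j t * (γ t + 1) = Φ j t * γ t + Φ j t := by ring
      have h8 : Φ j lst = γ j * ∏ k ∈ F, (γ k + 1) := hΦlst
      -- combine linearly with nonlinear atoms expanded
      have h9 : γ j * (∏ k ∈ F, (γ k + 1) - 1) = γ j * ∏ k ∈ F, (γ k + 1) - γ j := by ring
      have h10 : γ j * (∏ k ∈ F.filter (· < t), (γ k + 1) - 1)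
          = γ j * ∏ k ∈ F.filter (· < t), (γ k + 1) - γ j := by ring
      linarith [hsplitγ, hsF, hsS, hΦt, h7, h8, h9, h10]
    have hb1 : (0:ℤ) ≤ ∑ i ∈ F.filter (· < t), Φ j i * z i :=
      Finset.sum_nonneg (fun i _ => mul_nonneg (hΦ0 i) (hz0 i))
    have hb2 : Φ j t * (γ t + 1) ≤ Φ j t * z t := mul_le_mul_of_nonneg_left hzt (hΦ0 t)
    have hb3 : ∑ i ∈ F.filter (fun k => t < k), Φ j i * z i
        = ∑ i ∈ F.filter (fun k => t < k), Φ j i * γ i :=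
      Finset.sum_congr rfl (fun i hi => by rw [hgt i (Finset.mem_filter.mp hi).2])
    rw [hsplitz]
    linarith [hb1, hb2, hb3, hkey, hz0 j]

lemma scalar1 {X Y U μ ε : ℝ} (hY0 : 0 ≤ Y) (hYu : Y ≤ (1 - μ) * U) (hX : X ≤ Y + μ * U)
    (hμ0 : 0 ≤ μ) (hμε : μ ≤ ε) (hε1 : ε < 1) :
    (1 - μ) * (X - min (ε * U) X) ≤ (1 - ε) * Y := by
  rcases le_total X (ε * U) with h | h
  · rw [min_eq_right h]
    have h1 : (0:ℝ) ≤ 1 - ε := by linarith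
    nlinarith [mul_nonneg h1 hY0]
  · rw [min_eq_left h]
    nlinarith [mul_nonneg (sub_nonneg.2 hμε) (sub_nonneg.2 hYu),
      mul_nonneg (by linarith : (0:ℝ) ≤ 1 - μ) (by linarith : (0:ℝ) ≤ Y + μ * U - X)]

lemma scalar2 {Y U X dv μ ε : ℝ} (hY0 : 0 ≤ Y) (hYu : Y ≤ μ * U) (hYx : Y ≤ X)
    (hμ : ε ≤ μ) (hε : 0 < ε) (hdv : dv = min (ε * U) X ∨ dv = X) :
    ε * Y ≤ μ * dv := by
  rcases hdv with h | h
  · rw [h]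
    rcases le_total (ε * U) X with hh | hh
    · rw [min_eq_left hh]
      nlinarith
    · rw [min_eq_right hh]
      nlinarith
  · rw [h]
    nlinarith

/-- the slice lemma.  In the two-knapsack setting with `γ_n = θ_n − 1`,
let `ε ∈ (0,1)`, let `x ∈ [0,u]` with `x_n = θ_n − ε`, and let `δ` be given by
`δ_i = min(ε·u_i, x_i)` for `i ≤ m` and `δ_i = x_i` for `i > m`, where `m` is the largest
element of `I = {i : θ_i ≥ 1}` below the last index (if it exists, else `δ = x`).
Then the two families of inequalities (1) and (2) hold for every `j ∈ {1,…,n−1}`.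
`lst` denotes the last index (index `n` of the paper). -/
theorem stmt_18 {n : ℕ} (hn : 1 ≤ n)
    (a w u : Fin n → ℤ)
    (ha : ∀ i, 0 < a i) (hw : ∀ i, 0 < w i) (hu : ∀ i, 1 ≤ u i)
    (hsia : ∀ i j : Fin n, (j : ℕ) = (i : ℕ) + 1 →
      ∑ k ∈ Finset.Iic i, a k * u k ≤ a j)
    (hsiw : ∀ i j : Fin n, (j : ℕ) = (i : ℕ) + 1 →
      ∑ k ∈ Finset.Iic i, w k * u k ≤ w j)
    (b d : ℤ) (hb : 0 < b) (hd : 0 < d)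
    (hub : ∀ i, a i * u i ≤ b) (hdle : d ≤ ∑ i, w i * u i)
    (θ : Fin n → ℤ)
    (hθ : ∀ i : Fin n,
      θ i = min (u i) ((b - ∑ k ∈ Finset.Ioi i, a k * θ k).fdiv (a i)))
    (γ : Fin n → ℤ)
    (hγ : ∀ i : Fin n, γ i = u i - min (u i)
      (((∑ k, w k * u k) - d - ∑ k ∈ Finset.Ioi i, w k * (u k - γ k)).fdiv (w i)))
    (lst : Fin n) (hlst : (lst : ℕ) = n - 1)
    (h1 : d ≤ ∑ i ∈ Finset.Iio lst, w i * u i + (θ lst - 1) * w lst)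
    (h2 : γ lst = θ lst - 1)
    (φ : Fin n → Fin n → ℤ)
    (hφ : ∀ j i : Fin n, φ j i =
      (u j - θ j) * ∏ k ∈ (Finset.Ioo j i).filter (fun k => 1 ≤ θ k), (u k + 1 - θ k))
    (Φ : Fin n → Fin n → ℤ)
    (hΦ : ∀ j i : Fin n, Φ j i =
      γ j * ∏ k ∈ (Finset.Ioo j i).filter (fun k => γ k + 1 ≤ u k), (γ k + 1))
    (ε : ℝ) (hε0 : 0 < ε) (hε1 : ε < 1)
    (x : Fin n → ℝ) (hx : ∀ i, 0 ≤ x i ∧ x i ≤ (u i : ℝ))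
    (hxn : x lst = (θ lst : ℝ) - ε)
    (δ : Fin n → ℝ)
    (hδ : (∃ m : Fin n, m < lst ∧ 1 ≤ θ m ∧ (∀ k, k < lst → 1 ≤ θ k → k ≤ m) ∧
            (∀ i, i ≤ m → δ i = min (ε * (u i : ℝ)) (x i)) ∧
            (∀ i, m < i → δ i = x i)) ∨
          ((∀ k, k < lst → θ k < 1) ∧ ∀ i, δ i = x i)) :
    ∀ j : Fin n, j < lst →
      (x ∈ convexHull ℝ (toReal ''
          {z : Fin n → ℤ | (∀ i, 0 ≤ z i ∧ z i ≤ u i) ∧ ∑ i, a i * z i ≤ b}) →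
        x j - δ j - (θ j : ℝ) * (1 - ε) +
          ∑ i ∈ (Finset.Ioo j lst).filter (fun i => 1 ≤ θ i),
            (φ j i : ℝ) * (x i - δ i - (θ i : ℝ) * (1 - ε)) ≤ 0) ∧
      (x ∈ convexHull ℝ (toReal ''
          {z : Fin n → ℤ | (∀ i, 0 ≤ z i ∧ z i ≤ u i) ∧ d ≤ ∑ i, w i * z i}) →
        ε * (Φ j lst : ℝ) ≤
          δ j + ∑ i ∈ (Finset.Ioo j lst).filter (fun i => γ i + 1 ≤ u i),
            (Φ j i : ℝ) * δ i) := by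
  classical
  have hTop : ∀ k : Fin n, k ≤ lst := by
    intro k
    rw [Fin.le_def, hlst]
    have := k.isLt
    omega
  -- residual nonnegativity for θ
  have hri : ∀ i : Fin n, 0 ≤ b - ∑ k ∈ Finset.Ici i, a k * θ k ∧
      0 ≤ b - ∑ k ∈ Finset.Ioi i, a k * θ k := by
    refine revInd _ ?_
    intro i IH
    have hIoi : 0 ≤ b - ∑ k ∈ Finset.Ioi i, a k * θ k := by
      by_cases hi : (i : ℕ) + 1 < n
      · have hval : (⟨(i:ℕ)+1, hi⟩ : Fin n).val = (i:ℕ)+1 := rfl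
        have hIoieq : Finset.Ioi i = Finset.Ici (⟨(i:ℕ)+1, hi⟩ : Fin n) := by
          ext k
          rw [Finset.mem_Ioi, Finset.mem_Ici, Fin.lt_def, Fin.le_def, hval]
          omega
        rw [hIoieq]
        exact (IH ⟨(i:ℕ)+1, hi⟩ (by rw [Fin.lt_def, hval]; omega)).1
      · have hempty : Finset.Ioi i = ∅ := by
          apply Finset.eq_empty_iff_forall_notMem.mpr
          intro k hk
          rw [Finset.mem_Ioi, Fin.lt_def] at hk
          have := k.isLt
          omega
        rw [hempty]
        simpa using le_of_lt hb
    have hIci : Finset.Ici i = insert i (Finset.Ioi i) := by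
      ext k
      rw [Finset.mem_Ici, Finset.mem_insert, Finset.mem_Ioi]
      constructor
      · intro h
        rcases eq_or_lt_of_le h with h | h
        · exact Or.inl h.symm
        · exact Or.inr h
      · rintro (rfl | h)
        · exact le_refl _
        · exact le_of_lt h
    refine ⟨?_, hIoi⟩
    rw [hIci, Finset.sum_insert (by simp)]
    have hq : θ i ≤ (b - ∑ k ∈ Finset.Ioi i, a k * θ k) / (a i) := by
      have h := hθ i
      rw [Int.fdiv_eq_ediv_of_nonneg _ (le_of_lt (ha i))] at h
      rw [h]
      exact min_le_right _ _
    have hmod := Int.emod_nonneg (b - ∑ k ∈ Finset.Ioi i, a k * θ k) (ne_of_gt (ha i))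
    rw [Int.emod_def] at hmod
    have h1 : a i * θ i ≤ a i * ((b - ∑ k ∈ Finset.Ioi i, a k * θ k) / (a i)) :=
      mul_le_mul_of_nonneg_left hq (le_of_lt (ha i))
    linarith
  have hθ0 : ∀ i, 0 ≤ θ i := by
    intro i
    rw [hθ i, Int.fdiv_eq_ediv_of_nonneg _ (le_of_lt (ha i))]
    exact le_min (by linarith [hu i]) (Int.ediv_nonneg (hri i).2 (le_of_lt (ha i)))
  have hθu' : ∀ i, θ i ≤ u i := fun i => by rw [hθ i]; exact min_le_left _ _
  -- lex property of K≤
  have lexθ : ∀ z : Fin n → ℤ, (∀ i, 0 ≤ z i ∧ z i ≤ u i) → (∑ i, a i * z i ≤ b) →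
      ∀ t, (∀ k, t < k → z k = θ k) → z t ≤ θ t := by
    intro z hbox hkn t hk
    by_contra hlt
    push_neg at hlt
    have hθt_lt : θ t < u t := lt_of_lt_of_le hlt (hbox t).2
    have hθt : θ t = (b - ∑ k ∈ Finset.Ioi t, a k * θ k) / (a t) := by
      have h := hθ t
      rw [Int.fdiv_eq_ediv_of_nonneg _ (le_of_lt (ha t))] at h
      rcases min_cases (u t) ((b - ∑ k ∈ Finset.Ioi t, a k * θ k) / (a t)) with ⟨h1, _⟩ | ⟨h1, _⟩
      · rw [h, h1] at hθt_lt
        exact absurd hθt_lt (lt_irrefl _)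
      · rw [h, h1]
    have hmod2 := Int.emod_def (b - ∑ k ∈ Finset.Ioi t, a k * θ k) (a t)
    have hmod := Int.emod_lt_of_pos (b - ∑ k ∈ Finset.Ioi t, a k * θ k) (ha t)
    have hr_lt : b - ∑ k ∈ Finset.Ioi t, a k * θ k < a t * (θ t + 1) := by
      have hexp : a t * (θ t + 1) = a t * θ t + a t := by ring
      have hexp2 : a t * θ t = a t * ((b - ∑ k ∈ Finset.Ioi t, a k * θ k) / (a t)) := by
        rw [hθt]
      linarith
    have hsplit : ∑ k, a k * z k = (∑ k ∈ Finset.Iio t, a k * z k) + a t * z t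
        + ∑ k ∈ Finset.Ioi t, a k * z k := sum_split (fun k => a k * z k) t
    have h1 : ∑ k ∈ Finset.Ioi t, a k * z k = ∑ k ∈ Finset.Ioi t, a k * θ k :=
      Finset.sum_congr rfl (fun k hkk => by rw [hk k (Finset.mem_Ioi.mp hkk)])
    have h2 : 0 ≤ ∑ k ∈ Finset.Iio t, a k * z k :=
      Finset.sum_nonneg (fun k _ => mul_nonneg (le_of_lt (ha k)) (hbox k).1)
    have h3 : a t * (θ t + 1) ≤ a t * z t :=
      mul_le_mul_of_nonneg_left (by omega) (le_of_lt (ha t))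
    linarith [hkn]
  -- residual nonnegativity for γ
  have hRi : ∀ i : Fin n, 0 ≤ (∑ k, w k * u k) - d - ∑ k ∈ Finset.Ici i, w k * (u k - γ k) ∧
      0 ≤ (∑ k, w k * u k) - d - ∑ k ∈ Finset.Ioi i, w k * (u k - γ k) := by
    refine revInd _ ?_
    intro i IH
    have hIoi : 0 ≤ (∑ k, w k * u k) - d - ∑ k ∈ Finset.Ioi i, w k * (u k - γ k) := by
      by_cases hi : (i : ℕ) + 1 < n
      · have hval : (⟨(i:ℕ)+1, hi⟩ : Fin n).val = (i:ℕ)+1 := rfl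
        have hIoieq : Finset.Ioi i = Finset.Ici (⟨(i:ℕ)+1, hi⟩ : Fin n) := by
          ext k
          rw [Finset.mem_Ioi, Finset.mem_Ici, Fin.lt_def, Fin.le_def, hval]
          omega
        rw [hIoieq]
        exact (IH ⟨(i:ℕ)+1, hi⟩ (by rw [Fin.lt_def, hval]; omega)).1
      · have hempty : Finset.Ioi i = ∅ := by
          apply Finset.eq_empty_iff_forall_notMem.mpr
          intro k hk
          rw [Finset.mem_Ioi, Fin.lt_def] at hk
          have := k.isLt
          omega
        rw [hempty]
        simpa using hdle
    have hIci : Finset.Ici i = insert i (Finset.Ioi i) := by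
      ext k
      rw [Finset.mem_Ici, Finset.mem_insert, Finset.mem_Ioi]
      constructor
      · intro h
        rcases eq_or_lt_of_le h with h | h
        · exact Or.inl h.symm
        · exact Or.inr h
      · rintro (rfl | h)
        · exact le_refl _
        · exact le_of_lt h
    refine ⟨?_, hIoi⟩
    rw [hIci, Finset.sum_insert (by simp)]
    have hmineq : u i - γ i = min (u i)
        (((∑ k, w k * u k) - d - ∑ k ∈ Finset.Ioi i, w k * (u k - γ k)).fdiv (w i)) := by
      have := hγ i
      linarith
    have hq : u i - γ i ≤ ((∑ k, w k * u k) - d - ∑ k ∈ Finset.Ioi i, w k * (u k - γ k)) / (w i) := by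
      rw [hmineq, Int.fdiv_eq_ediv_of_nonneg _ (le_of_lt (hw i))]
      exact min_le_right _ _
    have hmod := Int.emod_nonneg ((∑ k, w k * u k) - d - ∑ k ∈ Finset.Ioi i, w k * (u k - γ k))
      (ne_of_gt (hw i))
    rw [Int.emod_def] at hmod
    have h1 : w i * (u i - γ i) ≤
        w i * (((∑ k, w k * u k) - d - ∑ k ∈ Finset.Ioi i, w k * (u k - γ k)) / (w i)) :=
      mul_le_mul_of_nonneg_left hq (le_of_lt (hw i))
    linarith
  have hγ0' : ∀ i, 0 ≤ γ i := by
    intro i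
    have h := hγ i
    have hm := min_le_left (u i)
      (((∑ k, w k * u k) - d - ∑ k ∈ Finset.Ioi i, w k * (u k - γ k)).fdiv (w i))
    linarith
  have hγu' : ∀ i, γ i ≤ u i := by
    intro i
    have h := hγ i
    have h0 : 0 ≤ min (u i)
        (((∑ k, w k * u k) - d - ∑ k ∈ Finset.Ioi i, w k * (u k - γ k)).fdiv (w i)) := by
      refine le_min (by linarith [hu i]) ?_
      rw [Int.fdiv_eq_ediv_of_nonneg _ (le_of_lt (hw i))]
      exact Int.ediv_nonneg (hRi i).2 (le_of_lt (hw i))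
    linarith
  -- lex property of K≥
  have lexγ : ∀ z : Fin n → ℤ, (∀ i, 0 ≤ z i ∧ z i ≤ u i) → (d ≤ ∑ i, w i * z i) →
      ∀ t, (∀ k, t < k → z k = γ k) → γ t ≤ z t := by
    intro z hbox hkn t hk
    by_contra hlt
    push_neg at hlt
    have hzγ : z t ≤ γ t - 1 := by omega
    have hγpos : 1 ≤ γ t := by linarith [(hbox t).1]
    have hmineq : u t - γ t = min (u t)
        (((∑ k, w k * u k) - d - ∑ k ∈ Finset.Ioi t, w k * (u k - γ k)).fdiv (w t)) := by
      have := hγ t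
      linarith
    have hqe : u t - γ t =
        ((∑ k, w k * u k) - d - ∑ k ∈ Finset.Ioi t, w k * (u k - γ k)) / (w t) := by
      rw [Int.fdiv_eq_ediv_of_nonneg _ (le_of_lt (hw t))] at hmineq
      rcases min_cases (u t)
        (((∑ k, w k * u k) - d - ∑ k ∈ Finset.Ioi t, w k * (u k - γ k)) / (w t)) with
        ⟨h1, _⟩ | ⟨h1, _⟩
      · rw [h1] at hmineq
        omega
      · rw [h1] at hmineq
        exact hmineq
    have hmod2 := Int.emod_def ((∑ k, w k * u k) - d - ∑ k ∈ Finset.Ioi t, w k * (u k - γ k)) (w t)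
    have hmod := Int.emod_lt_of_pos ((∑ k, w k * u k) - d - ∑ k ∈ Finset.Ioi t, w k * (u k - γ k)) (hw t)
    have hR_lt : (∑ k, w k * u k) - d - ∑ k ∈ Finset.Ioi t, w k * (u k - γ k)
        < w t * (u t - γ t + 1) := by
      have hexp : w t * (u t - γ t + 1) = w t * (u t - γ t) + w t := by ring
      have hexp2 : w t * (u t - γ t) =
          w t * (((∑ k, w k * u k) - d - ∑ k ∈ Finset.Ioi t, w k * (u k - γ k)) / (w t)) := by
        rw [hqe]
      linarith
    have hsplitz : ∑ k, w k * z k = (∑ k ∈ Finset.Iio t, w k * z k) + w t * z t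
        + ∑ k ∈ Finset.Ioi t, w k * z k := sum_split (fun k => w k * z k) t
    have hsplitu : ∑ k, w k * u k = (∑ k ∈ Finset.Iio t, w k * u k) + w t * u t
        + ∑ k ∈ Finset.Ioi t, w k * u k := sum_split (fun k => w k * u k) t
    have hsub : ∑ k ∈ Finset.Ioi t, w k * (u k - γ k)
        = ∑ k ∈ Finset.Ioi t, w k * u k - ∑ k ∈ Finset.Ioi t, w k * γ k := by
      rw [← Finset.sum_sub_distrib]
      exact Finset.sum_congr rfl (fun k _ => by ring)
    have hIoiz : ∑ k ∈ Finset.Ioi t, w k * z k = ∑ k ∈ Finset.Ioi t, w k * γ k :=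
      Finset.sum_congr rfl (fun k hkk => by rw [hk k (Finset.mem_Ioi.mp hkk)])
    have h1 : ∑ k ∈ Finset.Iio t, w k * z k ≤ ∑ k ∈ Finset.Iio t, w k * u k :=
      Finset.sum_le_sum (fun k _ => mul_le_mul_of_nonneg_left (hbox k).2 (le_of_lt (hw k)))
    have h2 : w t * z t ≤ w t * (γ t - 1) :=
      mul_le_mul_of_nonneg_left hzγ (le_of_lt (hw t))
    have he1 : w t * (γ t - 1) = w t * γ t - w t := by ring
    have he2 : w t * (u t - γ t + 1) = w t * u t - w t * γ t + w t := by ring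
    have he3 : w t * (u t - γ t) = w t * u t - w t * γ t := by ring
    linarith [hkn]
  -- nonnegativity of coefficients
  have hφ0 : ∀ j i, 0 ≤ φ j i := fun j i => by
    rw [hφ]
    exact mul_nonneg (by linarith [hθu' j])
      (Finset.prod_nonneg fun k _ => by linarith [hθu' k])
  have hΦ0 : ∀ j i, 0 ≤ Φ j i := fun j i => by
    rw [hΦ]
    exact mul_nonneg (hγ0' j) (Finset.prod_nonneg fun k _ => by linarith [hγ0' k])
  intro j hj
  refine ⟨fun hmem => ?_, fun hmem => ?_⟩
  · -- Part (1)
    have hF : ∀ i ∈ (Finset.Ioo j lst).filter (fun i => 1 ≤ θ i), i < lst ∧ 1 ≤ θ i :=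
      fun i hi => ⟨(Finset.mem_Ioo.mp (Finset.mem_filter.mp hi).1).2, (Finset.mem_filter.mp hi).2⟩
    rcases hδ with ⟨m, hmlt, hθm, hmax, hδmin, hδgt⟩ | ⟨hsmall, hδeq⟩
    · by_cases hjm : j ≤ m
      · -- main case
        rw [_root_.convexHull_eq] at hmem
        obtain ⟨ι, tf, wt, zv, hw0, hw1, hzs, hcm⟩ := hmem
        have hxz : ∀ i, x i = ∑ p ∈ tf, wt p * zv p i := by
          intro i
          rw [← hcm, Finset.centerMass_eq_of_sum_1 _ _ hw1]
          rw [Finset.sum_apply]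
          exact Finset.sum_congr rfl (fun p _ => rfl)
        have hexists : ∀ p ∈ tf, ∃ v : Fin n → ℤ,
            ((∀ i, 0 ≤ v i ∧ v i ≤ u i) ∧ ∑ i, a i * v i ≤ b) ∧ toReal v = zv p := by
          intro p hp
          obtain ⟨v, hv1, hv2⟩ := hzs p hp
          exact ⟨v, hv1, hv2⟩
        choose! ζ hζ1 hζ2 using hexists
        have hzvi : ∀ p ∈ tf, ∀ i, zv p i = (ζ p i : ℝ) := by
          intro p hp i
          rw [← hζ2 p hp]
          rfl
        have hζbox : ∀ p ∈ tf, ∀ i, 0 ≤ ζ p i ∧ ζ p i ≤ u i := fun p hp => (hζ1 p hp).1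
        have hζkn : ∀ p ∈ tf, ∑ i, a i * ζ p i ≤ b := fun p hp => (hζ1 p hp).2
        set G := tf.filter (fun p => ζ p lst = θ lst) with hG
        set μ := ∑ p ∈ tf.filter (fun p => ¬ ζ p lst = θ lst), wt p with hμ
        have hGsub : G ⊆ tf := Finset.filter_subset _ _
        have hGsum : ∑ p ∈ G, wt p = 1 - μ := by
          have hpart := Finset.sum_filter_add_sum_filter_not tf (fun p => ζ p lst = θ lst) wt
          rw [hw1] at hpart
          rw [hG, hμ]
          linarith
        have hμ0 : 0 ≤ μ :=
          Finset.sum_nonneg (fun p hp => hw0 p (Finset.filter_subset _ _ hp))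
        have hζlst : ∀ p ∈ tf, ζ p lst ≤ θ lst := by
          intro p hp
          exact lexθ (ζ p) (hζbox p hp) (hζkn p hp) lst
            (fun k hk => absurd (hTop k) (not_le.mpr hk))
        have hxlst : ∑ p ∈ tf, wt p * (ζ p lst : ℝ) = (θ lst : ℝ) - ε := by
          rw [← hxn, hxz lst]
          exact Finset.sum_congr rfl (fun p hp => by rw [hzvi p hp lst])
        have hμε : μ ≤ ε := by
          have key : ∑ p ∈ tf, wt p * ((θ lst : ℝ) - (ζ p lst : ℝ)) = ε := by
            have e : ∀ p ∈ tf, wt p * ((θ lst : ℝ) - (ζ p lst : ℝ))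
                = wt p * (θ lst : ℝ) - wt p * (ζ p lst : ℝ) := fun p _ => by ring
            rw [Finset.sum_congr rfl e, Finset.sum_sub_distrib, ← Finset.sum_mul, hw1, hxlst]
            ring
          have hterm_nn : ∀ p ∈ tf, 0 ≤ wt p * ((θ lst : ℝ) - (ζ p lst : ℝ)) := by
            intro p hp
            apply mul_nonneg (hw0 p hp)
            have := hζlst p hp
            have : (ζ p lst : ℝ) ≤ (θ lst : ℝ) := by exact_mod_cast this
            linarith
          have hbad : ∀ p ∈ tf.filter (fun p => ¬ ζ p lst = θ lst),
              wt p ≤ wt p * ((θ lst : ℝ) - (ζ p lst : ℝ)) := by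
            intro p hp
            have hp1 := (Finset.mem_filter.mp hp).1
            have hp2 := (Finset.mem_filter.mp hp).2
            have hle : ζ p lst ≤ θ lst - 1 := by
              have := hζlst p hp1
              omega
            have hle' : (ζ p lst : ℝ) ≤ (θ lst : ℝ) - 1 := by exact_mod_cast hle
            nlinarith [hw0 p hp1]
          have h1 : μ ≤ ∑ p ∈ tf.filter (fun p => ¬ ζ p lst = θ lst),
              wt p * ((θ lst : ℝ) - (ζ p lst : ℝ)) := Finset.sum_le_sum hbad
          have h2 : ∑ p ∈ tf.filter (fun p => ¬ ζ p lst = θ lst),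
              wt p * ((θ lst : ℝ) - (ζ p lst : ℝ))
              ≤ ∑ p ∈ tf, wt p * ((θ lst : ℝ) - (ζ p lst : ℝ)) :=
            Finset.sum_le_sum_of_subset_of_nonneg (Finset.filter_subset _ _)
              (fun p hp _ => hterm_nn p hp)
          linarith
        have hμlt1 : μ < 1 := lt_of_le_of_lt hμε hε1
        set Y : Fin n → ℝ := fun i => ∑ p ∈ G, wt p * (ζ p i : ℝ) with hY
        have hY0 : ∀ i, 0 ≤ Y i := by
          intro i
          apply Finset.sum_nonneg
          intro p hp
          exact mul_nonneg (hw0 p (hGsub hp))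
            (by exact_mod_cast (hζbox p (hGsub hp) i).1)
        have hYu : ∀ i, Y i ≤ (1 - μ) * (u i : ℝ) := by
          intro i
          rw [← hGsum, Finset.sum_mul]
          apply Finset.sum_le_sum
          intro p hp
          exact mul_le_mul_of_nonneg_left
            (by exact_mod_cast (hζbox p (hGsub hp) i).2) (hw0 p (hGsub hp))
        have hxY : ∀ i, x i ≤ Y i + μ * (u i : ℝ) := by
          intro i
          rw [hxz i, ← Finset.sum_filter_add_sum_filter_not tf (fun p => ζ p lst = θ lst)
            (fun p => wt p * zv p i)]
          have e1 : ∑ p ∈ tf.filter (fun p => ζ p lst = θ lst), wt p * zv p i = Y i := by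
            rw [hY]
            exact Finset.sum_congr rfl (fun p hp => by
              rw [hzvi p (Finset.filter_subset _ _ hp) i])
          have e2 : ∑ p ∈ tf.filter (fun p => ¬ ζ p lst = θ lst), wt p * zv p i
              ≤ μ * (u i : ℝ) := by
            rw [hμ, Finset.sum_mul]
            apply Finset.sum_le_sum
            intro p hp
            have hp1 := (Finset.mem_filter.mp hp).1
            rw [hzvi p hp1 i]
            exact mul_le_mul_of_nonneg_left
              (by exact_mod_cast (hζbox p hp1 i).2) (hw0 p hp1)
          rw [e1]
          linarith [e2]
        -- per-point lemma A, cast to ℝ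
        have hC : ∀ p ∈ G, (ζ p j : ℝ)
            + ∑ i ∈ (Finset.Ioo j lst).filter (fun i => 1 ≤ θ i), (φ j i : ℝ) * (ζ p i : ℝ)
            ≤ (θ j : ℝ)
            + ∑ i ∈ (Finset.Ioo j lst).filter (fun i => 1 ≤ θ i), (φ j i : ℝ) * (θ i : ℝ) := by
          intro p hp
          have hp1 := hGsub hp
          have hint := lemA u θ (ζ p) φ hφ j lst hTop
            (fun i => (hζbox p hp1 i).1) (fun i => (hζbox p hp1 i).2) hθu'
            (lexθ (ζ p) (hζbox p hp1) (hζkn p hp1)) ((Finset.mem_filter.mp hp).2)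
          exact_mod_cast hint
        -- aggregation
        have hswap : Y j + ∑ i ∈ (Finset.Ioo j lst).filter (fun i => 1 ≤ θ i),
            (φ j i : ℝ) * Y i
            = ∑ p ∈ G, wt p * ((ζ p j : ℝ)
              + ∑ i ∈ (Finset.Ioo j lst).filter (fun i => 1 ≤ θ i),
                (φ j i : ℝ) * (ζ p i : ℝ)) := by
          have e : ∀ i, (φ j i : ℝ) * Y i
              = ∑ p ∈ G, wt p * ((φ j i : ℝ) * (ζ p i : ℝ)) := by
            intro i
            rw [hY, Finset.mul_sum]
            exact Finset.sum_congr rfl (fun p _ => by ring)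
          rw [Finset.sum_congr rfl (fun i (_ : i ∈ (Finset.Ioo j lst).filter (fun i => 1 ≤ θ i)) => e i),
            Finset.sum_comm, ← Finset.sum_add_distrib]
          apply Finset.sum_congr rfl
          intro p _
          rw [mul_add, Finset.mul_sum]
        have hagg : Y j + ∑ i ∈ (Finset.Ioo j lst).filter (fun i => 1 ≤ θ i),
            (φ j i : ℝ) * Y i
            ≤ (1 - μ) * ((θ j : ℝ)
              + ∑ i ∈ (Finset.Ioo j lst).filter (fun i => 1 ≤ θ i),
                (φ j i : ℝ) * (θ i : ℝ)) := by
          rw [hswap, ← hGsum, Finset.sum_mul]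
          exact Finset.sum_le_sum (fun p hp =>
            mul_le_mul_of_nonneg_left (hC p hp) (hw0 p (hGsub hp)))
        -- per-coordinate scalar bound
        have hφr0 : ∀ i, (0:ℝ) ≤ (φ j i : ℝ) := fun i => by exact_mod_cast hφ0 j i
        have hterm : ∀ i ∈ (Finset.Ioo j lst).filter (fun i => 1 ≤ θ i),
            (1 - μ) * (x i - δ i) ≤ (1 - ε) * Y i := by
          intro i hi
          have him : i ≤ m := hmax i (hF i hi).1 (hF i hi).2
          rw [hδmin i him]
          exact scalar1 (hY0 i) (hYu i) (hxY i) hμ0 hμε hε1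
        have htermj : (1 - μ) * (x j - δ j) ≤ (1 - ε) * Y j := by
          rw [hδmin j hjm]
          exact scalar1 (hY0 j) (hYu j) (hxY j) hμ0 hμε hε1
        have hsumterm : (1 - μ) * ((x j - δ j)
            + ∑ i ∈ (Finset.Ioo j lst).filter (fun i => 1 ≤ θ i), (φ j i : ℝ) * (x i - δ i))
            ≤ (1 - ε) * (Y j + ∑ i ∈ (Finset.Ioo j lst).filter (fun i => 1 ≤ θ i),
              (φ j i : ℝ) * Y i) := by
          have hs : ∑ i ∈ (Finset.Ioo j lst).filter (fun i => 1 ≤ θ i),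
              (1 - μ) * ((φ j i : ℝ) * (x i - δ i))
              ≤ ∑ i ∈ (Finset.Ioo j lst).filter (fun i => 1 ≤ θ i),
                (1 - ε) * ((φ j i : ℝ) * Y i) := by
            apply Finset.sum_le_sum
            intro i hi
            have := mul_le_mul_of_nonneg_left (hterm i hi) (hφr0 i)
            nlinarith [this]
          have eL := Finset.mul_sum ((Finset.Ioo j lst).filter (fun i => 1 ≤ θ i))
            (fun i => (φ j i : ℝ) * (x i - δ i)) (1 - μ)
          have eR := Finset.mul_sum ((Finset.Ioo j lst).filter (fun i => 1 ≤ θ i))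
            (fun i => (φ j i : ℝ) * Y i) (1 - ε)
          linarith [hs, htermj, eL, eR]
        have hεle : (0:ℝ) ≤ 1 - ε := by linarith
        have h1μ : (0:ℝ) < 1 - μ := by linarith
        have step2 : (1 - ε) * (Y j + ∑ i ∈ (Finset.Ioo j lst).filter (fun i => 1 ≤ θ i),
              (φ j i : ℝ) * Y i)
            ≤ (1 - μ) * ((1 - ε) * ((θ j : ℝ)
              + ∑ i ∈ (Finset.Ioo j lst).filter (fun i => 1 ≤ θ i),
                (φ j i : ℝ) * (θ i : ℝ))) := by
          have := mul_le_mul_of_nonneg_left hagg hεle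
          nlinarith [this]
        have hfinal : (x j - δ j)
            + ∑ i ∈ (Finset.Ioo j lst).filter (fun i => 1 ≤ θ i), (φ j i : ℝ) * (x i - δ i)
            ≤ (1 - ε) * ((θ j : ℝ)
              + ∑ i ∈ (Finset.Ioo j lst).filter (fun i => 1 ≤ θ i),
                (φ j i : ℝ) * (θ i : ℝ)) :=
          le_of_mul_le_mul_left (le_trans hsumterm step2) h1μ
        have expand : ∑ i ∈ (Finset.Ioo j lst).filter (fun i => 1 ≤ θ i),
            (φ j i : ℝ) * (x i - δ i - (θ i : ℝ) * (1 - ε))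
            = ∑ i ∈ (Finset.Ioo j lst).filter (fun i => 1 ≤ θ i), (φ j i : ℝ) * (x i - δ i)
              - (1 - ε) * ∑ i ∈ (Finset.Ioo j lst).filter (fun i => 1 ≤ θ i),
                (φ j i : ℝ) * (θ i : ℝ) := by
          rw [Finset.mul_sum, ← Finset.sum_sub_distrib]
          exact Finset.sum_congr rfl (fun i _ => by ring)
        linarith [hfinal, expand]
      · -- j > m : trivial case
        push_neg at hjm
        have hFempty : (Finset.Ioo j lst).filter (fun i => 1 ≤ θ i) = ∅ := by
          apply Finset.filter_eq_empty_iff.mpr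
          intro i hi
          intro hcon
          have him : i ≤ m := hmax i (Finset.mem_Ioo.mp hi).2 hcon
          have hji : j < i := (Finset.mem_Ioo.mp hi).1
          exact absurd (lt_of_le_of_lt him hjm) (asymm hji)
        rw [hFempty, Finset.sum_empty, hδgt j hjm]
        have : (0:ℝ) ≤ (θ j : ℝ) * (1 - ε) :=
          mul_nonneg (by exact_mod_cast hθ0 j) (by linarith)
        linarith
    · -- branch with no index below lst in I
      have hFempty : (Finset.Ioo j lst).filter (fun i => 1 ≤ θ i) = ∅ := by
        apply Finset.filter_eq_empty_iff.mpr
        intro i hi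
        intro hcon
        have := hsmall i (Finset.mem_Ioo.mp hi).2
        omega
      rw [hFempty, Finset.sum_empty, hδeq j]
      have : (0:ℝ) ≤ (θ j : ℝ) * (1 - ε) :=
        mul_nonneg (by exact_mod_cast hθ0 j) (by linarith)
      linarith
  · -- Part (2)
    rw [_root_.convexHull_eq] at hmem
    obtain ⟨ι, tf, wt, zv, hw0, hw1, hzs, hcm⟩ := hmem
    have hxz : ∀ i, x i = ∑ p ∈ tf, wt p * zv p i := by
      intro i
      rw [← hcm, Finset.centerMass_eq_of_sum_1 _ _ hw1]
      rw [Finset.sum_apply]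
      exact Finset.sum_congr rfl (fun p _ => rfl)
    have hexists : ∀ p ∈ tf, ∃ v : Fin n → ℤ,
        ((∀ i, 0 ≤ v i ∧ v i ≤ u i) ∧ d ≤ ∑ i, w i * v i) ∧ toReal v = zv p := by
      intro p hp
      obtain ⟨v, hv1, hv2⟩ := hzs p hp
      exact ⟨v, hv1, hv2⟩
    choose! ζ hζ1 hζ2 using hexists
    have hzvi : ∀ p ∈ tf, ∀ i, zv p i = (ζ p i : ℝ) := by
      intro p hp i
      rw [← hζ2 p hp]
      rfl
    have hζbox : ∀ p ∈ tf, ∀ i, 0 ≤ ζ p i ∧ ζ p i ≤ u i := fun p hp => (hζ1 p hp).1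
    have hζkn : ∀ p ∈ tf, d ≤ ∑ i, w i * ζ p i := fun p hp => (hζ1 p hp).2
    set G := tf.filter (fun p => ζ p lst = γ lst) with hG
    set μ := ∑ p ∈ G, wt p with hμ
    have hGsub : G ⊆ tf := Finset.filter_subset _ _
    have hμ0 : 0 ≤ μ := Finset.sum_nonneg (fun p hp => hw0 p (hGsub hp))
    have hζlst : ∀ p ∈ tf, γ lst ≤ ζ p lst := by
      intro p hp
      exact lexγ (ζ p) (hζbox p hp) (hζkn p hp) lst
        (fun k hk => absurd (hTop k) (not_le.mpr hk))
    have hnotGsum : ∑ p ∈ tf.filter (fun p => ¬ ζ p lst = γ lst), wt p = 1 - μ := by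
      have hpart := Finset.sum_filter_add_sum_filter_not tf (fun p => ζ p lst = γ lst) wt
      rw [hw1] at hpart
      rw [hμ, hG]
      linarith
    have hxlst : ∑ p ∈ tf, wt p * (ζ p lst : ℝ) = (γ lst : ℝ) + 1 - ε := by
      rw [← Finset.sum_congr rfl (fun p hp => by rw [hzvi p hp lst] :
        ∀ p ∈ tf, wt p * zv p lst = wt p * (ζ p lst : ℝ)), ← hxz lst, hxn]
      have : (θ lst : ℝ) = (γ lst : ℝ) + 1 := by
        have : θ lst = γ lst + 1 := by omega
        exact_mod_cast this
      linarith
    have hεμ : ε ≤ μ := by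
      have e1 : ∑ p ∈ G, wt p * (ζ p lst : ℝ) = μ * (γ lst : ℝ) := by
        rw [hμ, Finset.sum_mul]
        apply Finset.sum_congr rfl
        intro p hp
        rw [(Finset.mem_filter.mp hp).2]
      have e2 : (1 - μ) * ((γ lst : ℝ) + 1)
          ≤ ∑ p ∈ tf.filter (fun p => ¬ ζ p lst = γ lst), wt p * (ζ p lst : ℝ) := by
        rw [← hnotGsum, Finset.sum_mul]
        apply Finset.sum_le_sum
        intro p hp
        have hp1 := (Finset.mem_filter.mp hp).1
        have hp2 := (Finset.mem_filter.mp hp).2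
        have hge : γ lst + 1 ≤ ζ p lst := by
          have := hζlst p hp1
          omega
        have hge' : (γ lst : ℝ) + 1 ≤ (ζ p lst : ℝ) := by exact_mod_cast hge
        exact mul_le_mul_of_nonneg_left hge' (hw0 p hp1)
      have hpart : ∑ p ∈ G, wt p * (ζ p lst : ℝ)
          + ∑ p ∈ tf.filter (fun p => ¬ ζ p lst = γ lst), wt p * (ζ p lst : ℝ)
          = ∑ p ∈ tf, wt p * (ζ p lst : ℝ) := by
        rw [hG]
        exact Finset.sum_filter_add_sum_filter_not tf _ _
      nlinarith [e1, e2, hpart, hxlst]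
    have hμpos : 0 < μ := lt_of_lt_of_le hε0 hεμ
    set Y : Fin n → ℝ := fun i => ∑ p ∈ G, wt p * (ζ p i : ℝ) with hY
    have hY0 : ∀ i, 0 ≤ Y i := by
      intro i
      apply Finset.sum_nonneg
      intro p hp
      exact mul_nonneg (hw0 p (hGsub hp)) (by exact_mod_cast (hζbox p (hGsub hp) i).1)
    have hYu : ∀ i, Y i ≤ μ * (u i : ℝ) := by
      intro i
      rw [hμ, Finset.sum_mul]
      apply Finset.sum_le_sum
      intro p hp
      exact mul_le_mul_of_nonneg_left
        (by exact_mod_cast (hζbox p (hGsub hp) i).2) (hw0 p (hGsub hp))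
    have hxY : ∀ i, Y i ≤ x i := by
      intro i
      rw [hxz i]
      have e1 : Y i = ∑ p ∈ G, wt p * zv p i :=
        Finset.sum_congr rfl (fun p hp => by rw [hzvi p (hGsub hp) i])
      rw [e1]
      apply Finset.sum_le_sum_of_subset_of_nonneg hGsub
      intro p hp _
      rw [hzvi p hp i]
      exact mul_nonneg (hw0 p hp) (by exact_mod_cast (hζbox p hp i).1)
    -- δ lower bound: ε * Y i ≤ μ * δ i for i < lst
    have hδbound : ∀ i, i < lst → ε * Y i ≤ μ * δ i := by
      intro i hilst
      have hform : δ i = min (ε * (u i : ℝ)) (x i) ∨ δ i = x i := by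
        rcases hδ with ⟨m, _, _, _, hδmin, hδgt⟩ | ⟨_, hδeq⟩
        · rcases le_or_gt i m with h | h
          · exact Or.inl (hδmin i h)
          · exact Or.inr (hδgt i h)
        · exact Or.inr (hδeq i)
      exact scalar2 (hY0 i) (hYu i) (hxY i) hεμ hε0 hform
    -- per-point lemma B, cast to ℝ
    have hB : ∀ p ∈ G, (Φ j lst : ℝ) ≤ (ζ p j : ℝ)
        + ∑ i ∈ (Finset.Ioo j lst).filter (fun i => γ i + 1 ≤ u i),
          (Φ j i : ℝ) * (ζ p i : ℝ) := by
      intro p hp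
      have hp1 := hGsub hp
      have hint := lemB u γ (ζ p) Φ hΦ j lst hTop
        (fun i => (hζbox p hp1 i).1) (fun i => (hζbox p hp1 i).2) hγ0'
        (lexγ (ζ p) (hζbox p hp1) (hζkn p hp1)) ((Finset.mem_filter.mp hp).2)
      exact_mod_cast hint
    -- aggregation
    have hswap : Y j + ∑ i ∈ (Finset.Ioo j lst).filter (fun i => γ i + 1 ≤ u i),
        (Φ j i : ℝ) * Y i
        = ∑ p ∈ G, wt p * ((ζ p j : ℝ)
          + ∑ i ∈ (Finset.Ioo j lst).filter (fun i => γ i + 1 ≤ u i),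
            (Φ j i : ℝ) * (ζ p i : ℝ)) := by
      have e : ∀ i, (Φ j i : ℝ) * Y i
          = ∑ p ∈ G, wt p * ((Φ j i : ℝ) * (ζ p i : ℝ)) := by
        intro i
        simp only [hY]
        rw [Finset.mul_sum]
        exact Finset.sum_congr rfl (fun p _ => by ring)
      rw [Finset.sum_congr rfl
          (fun i (_ : i ∈ (Finset.Ioo j lst).filter (fun i => γ i + 1 ≤ u i)) => e i),
        Finset.sum_comm, ← Finset.sum_add_distrib]
      apply Finset.sum_congr rfl
      intro p _
      rw [mul_add, Finset.mul_sum]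
    have hagg : μ * (Φ j lst : ℝ)
        ≤ Y j + ∑ i ∈ (Finset.Ioo j lst).filter (fun i => γ i + 1 ≤ u i),
          (Φ j i : ℝ) * Y i := by
      rw [hswap, hμ, Finset.sum_mul]
      exact Finset.sum_le_sum (fun p hp =>
        mul_le_mul_of_nonneg_left (hB p hp) (hw0 p (hGsub hp)))
    have hΦr0 : ∀ i, (0:ℝ) ≤ (Φ j i : ℝ) := fun i => by exact_mod_cast hΦ0 j i
    have hsum2 : ε * (Y j + ∑ i ∈ (Finset.Ioo j lst).filter (fun i => γ i + 1 ≤ u i),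
          (Φ j i : ℝ) * Y i)
        ≤ μ * (δ j + ∑ i ∈ (Finset.Ioo j lst).filter (fun i => γ i + 1 ≤ u i),
          (Φ j i : ℝ) * δ i) := by
      have hs : ∑ i ∈ (Finset.Ioo j lst).filter (fun i => γ i + 1 ≤ u i),
          ε * ((Φ j i : ℝ) * Y i)
          ≤ ∑ i ∈ (Finset.Ioo j lst).filter (fun i => γ i + 1 ≤ u i),
            μ * ((Φ j i : ℝ) * δ i) := by
        apply Finset.sum_le_sum
        intro i hi
        have hilst : i < lst := (Finset.mem_Ioo.mp (Finset.mem_filter.mp hi).1).2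
        have := mul_le_mul_of_nonneg_left (hδbound i hilst) (hΦr0 i)
        linarith [this]
      have eL := Finset.mul_sum ((Finset.Ioo j lst).filter (fun i => γ i + 1 ≤ u i))
        (fun i => (Φ j i : ℝ) * Y i) ε
      have eR := Finset.mul_sum ((Finset.Ioo j lst).filter (fun i => γ i + 1 ≤ u i))
        (fun i => (Φ j i : ℝ) * δ i) μ
      have hj' := hδbound j hj
      linarith [hs, eL, eR, hj']
    have hchain : μ * (ε * (Φ j lst : ℝ))
        ≤ μ * (δ j + ∑ i ∈ (Finset.Ioo j lst).filter (fun i => γ i + 1 ≤ u i),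
          (Φ j i : ℝ) * δ i) := by
      have h1 := mul_le_mul_of_nonneg_left hagg (le_of_lt hε0)
      linarith [h1, hsum2]
    exact le_of_mul_le_mul_left hchain hμpos
end
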